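/- arXiv:2307.15549 — 2 statements merged into one kernel-verified Lean document; each statement's English description precedes it below -/
import Mathlib

section
/- Upward-closed framing theorem: let h₁, h₂, h_F be flow graphs with h₁ ⋆ h_F defined, h₁ ⪯ctx h₂, and compatible_⪯(h₁), compatible_⪯(h₂), compatible_⪯(h_F). Then there exist flow graphs h₂' ∈ closure^{h_F.X}_⪯(h₂) and h_F' ∈ closure^{h₂.X}_⪯(h_F) such that h₂' ⋆ h_F' is defined and h₁ ⋆ h_F ⪯ctx h₂' ⋆ h_F'. -/
universe u

/-- A flow monoid: a commutative monoid whose natural order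
(`m ≤ n ↔ ∃ o, n = m + o`) is a partial order that forms an ω-cpo, with
continuous addition. `csup` assigns to every ascending chain its join. -/
class FlowMonoid (M : Type u) extends AddCommMonoid M, PartialOrder M, IsOrderedAddMonoid M,
    CanonicallyOrderedAdd M where
  /-- The join of an ascending chain. -/
  csup : (ℕ → M) → M
  isLUB_csup : ∀ K : ℕ → M, Monotone K → IsLUB (Set.range K) (csup K)
  add_csup : ∀ (n : M) (K : ℕ → M), Monotone K → n + csup K = csup fun i => n + K i

variable {M : Type u} [FlowMonoid M]

/-- Continuity: `f` commutes with joins of ascending chains. -/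
def FMCont (f : M → M) : Prop :=
  ∀ K : ℕ → M, Monotone K →
    IsLUB (Set.range fun i => f (K i)) (f (FlowMonoid.csup K))

/-- A flow graph: a finite set of nodes `X ⊆ ℕ`, continuous edge functions, and
a finitely supported inflow from sources outside `X` into `X`. (The edge
functions of sources outside `X` and the inflow outside its domain are
canonically zero.) -/
structure FlowGraph (M : Type u) [FlowMonoid M] where
  /-- The nodes. -/
  X : Finset ℕ
  /-- The edge functions: `E x y` labels the edge from `x` to `y`. -/
  E : ℕ → ℕ → M → M
  /-- The inflow: `inflow y x` is the flow the graph receives at `x ∈ X` from the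
  external node `y ∉ X`. -/
  inflow : ℕ → ℕ → M
  econt : ∀ x y, x ∈ X → FMCont (E x y)
  edom : ∀ x y, x ∉ X → E x y = fun _ => 0
  inflow_fin : ∀ x, (Function.support fun y => inflow y x).Finite
  inflow_dom : ∀ y x, inflow y x ≠ 0 → y ∉ X ∧ x ∈ X

namespace FlowGraph

/-- One step of the flow fixed-point computation, with inflow `i`. -/
noncomputable def stepWith (h : FlowGraph M) (i : ℕ → ℕ → M) (c : ℕ → M) : ℕ → M :=
  fun x => if x ∈ h.X then (∑ᶠ y, i y x) + ∑ y ∈ h.X, h.E y x (c y) else 0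

/-- The flow for a custom inflow `i`, obtained by Kleene iteration: the least
function satisfying the flow equation. -/
noncomputable def flowWith (h : FlowGraph M) (i : ℕ → ℕ → M) : ℕ → M :=
  fun x => FlowMonoid.csup fun n => (h.stepWith i)^[n] (fun _ => 0) x

/-- The flow of a flow graph. -/
noncomputable def flow (h : FlowGraph M) : ℕ → M := h.flowWith h.inflow

/-- The outflow of a flow graph: `out x y = E x y (flow x)`. -/
noncomputable def out (h : FlowGraph M) (x y : ℕ) : M := h.E x y (h.flow x)

/-- The transfer function: maps an inflow `i` to the resulting outflow at `y`. -/
noncomputable def tf (h : FlowGraph M) (i : ℕ → ℕ → M) (y : ℕ) : M :=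
  ∑ x ∈ h.X, h.E x y (h.flowWith i x)

/-- The ghost multiplication of flow graphs: disjoint union of the node sets and
edges; the inflow of each component is restricted to sources outside the other. -/
def gmul (s t : FlowGraph M) : FlowGraph M where
  X := s.X ∪ t.X
  E := fun x y => if x ∈ s.X then s.E x y else t.E x y
  inflow := fun y x => if y ∈ s.X ∪ t.X then 0 else s.inflow y x + t.inflow y x
  econt := by
    intro x y hx
    try dsimp only
    by_cases hs : x ∈ s.X
    · rw [if_pos hs]; exact s.econt x y hs
    · rw [if_neg hs]
      rcases Finset.mem_union.mp hx with h | h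
      · exact absurd h hs
      · exact t.econt x y h
  edom := by
    intro x y hx
    try dsimp only
    rw [if_neg fun h => hx (Finset.mem_union_left _ h)]
    exact t.edom x y fun h => hx (Finset.mem_union_right _ h)
  inflow_fin := by
    intro x
    refine Set.Finite.subset ((s.inflow_fin x).union (t.inflow_fin x)) ?_
    intro y hy
    rw [Function.mem_support] at hy
    try dsimp only at hy
    by_cases hmem : y ∈ s.X ∪ t.X
    · rw [if_pos hmem] at hy; exact absurd rfl hy
    · rw [if_neg hmem] at hy
      by_cases h1 : s.inflow y x = 0
      · have h2 : t.inflow y x ≠ 0 := fun h2 => hy (by rw [h1, h2, add_zero])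
        exact Set.mem_union_right _ (Function.mem_support.mpr h2)
      · exact Set.mem_union_left _ (Function.mem_support.mpr h1)
  inflow_dom := by
    intro y x hy
    try dsimp only at hy
    by_cases hmem : y ∈ s.X ∪ t.X
    · rw [if_pos hmem] at hy; exact absurd rfl hy
    · rw [if_neg hmem] at hy
      refine ⟨hmem, ?_⟩
      by_cases h1 : s.inflow y x = 0
      · have h2 : t.inflow y x ≠ 0 := fun h2 => hy (by rw [h1, h2, add_zero])
        exact Finset.mem_union_right _ (t.inflow_dom y x h2).2
      · exact Finset.mem_union_left _ (s.inflow_dom y x h1).2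

/-- Definedness of the multiplication `s ⋆ t` of flow graphs: the ghost
multiplication is defined, the inflow expectation of each graph at the mutual
boundary matches the outflow of the other, and the flows are preserved in the
composition (whose result is then `gmul s t`). -/
def MDef (s t : FlowGraph M) : Prop :=
  Disjoint s.X t.X ∧
  (∀ x ∈ s.X, ∀ y ∈ t.X, s.out x y = t.inflow x y ∧ t.out y x = s.inflow y x) ∧
  (∀ x ∈ s.X, (gmul s t).flow x = s.flow x) ∧
  (∀ y ∈ t.X, (gmul s t).flow y = t.flow y)

end FlowGraph


section FMLemmas

open FlowMonoid

variable {M : Type u} [FlowMonoid M]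

lemma le_csup (K : ℕ → M) (hK : Monotone K) (i : ℕ) : K i ≤ csup K :=
  (isLUB_csup K hK).1 ⟨i, rfl⟩

lemma csup_le {K : ℕ → M} (hK : Monotone K) {m : M} (h : ∀ i, K i ≤ m) : csup K ≤ m :=
  (isLUB_csup K hK).2 (by rintro _ ⟨i, rfl⟩; exact h i)

lemma csup_eq_of_isLUB {K : ℕ → M} (hK : Monotone K) {m : M}
    (h : IsLUB (Set.range K) m) : csup K = m :=
  (isLUB_csup K hK).unique h

lemma csup_const (m : M) : csup (fun _ => m) = m := by
  refine csup_eq_of_isLUB (monotone_const) ?_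
  constructor
  · rintro _ ⟨i, rfl⟩; exact le_rfl
  · intro u hu; exact hu ⟨0, rfl⟩

lemma csup_congr {K L : ℕ → M} (h : ∀ i, K i = L i) : csup K = csup L := by
  have : K = L := funext h
  rw [this]

lemma csup_shift {K : ℕ → M} (hK : Monotone K) : csup (fun n => K (n + 1)) = csup K := by
  refine csup_eq_of_isLUB (fun a b hab => hK (by omega)) ?_
  constructor
  · rintro _ ⟨i, rfl⟩; exact le_csup K hK (i + 1)
  · intro u hu
    refine csup_le hK fun i => le_trans (hK (Nat.le_succ i)) (hu ⟨i, rfl⟩)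

lemma csup_mono {K L : ℕ → M} (hK : Monotone K) (hL : Monotone L)
    (h : ∀ i, K i ≤ L i) : csup K ≤ csup L :=
  csup_le hK fun i => le_trans (h i) (le_csup L hL i)

lemma fmcont_mono {f : M → M} (hf : FMCont f) : Monotone f := by
  intro m n hmn
  set K : ℕ → M := fun i => if i = 0 then m else n with hKdef
  have hK : Monotone K := by
    intro a b hab
    by_cases ha : a = 0
    · by_cases hb : b = 0 <;> simp [hKdef, ha, hb, hmn]
    · have hb : b ≠ 0 := by omega
      simp [hKdef, ha, hb]
  have hcs : csup K = n := by
    refine csup_eq_of_isLUB hK ?_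
    constructor
    · rintro _ ⟨i, rfl⟩
      by_cases hi : i = 0 <;> simp [hKdef, hi, hmn]
    · intro u hu
      have : K 1 ≤ u := hu ⟨1, rfl⟩
      simpa [hKdef] using this
  have h0 : f (K 0) ≤ f (csup K) := (hf K hK).1 ⟨0, rfl⟩
  rw [hcs] at h0
  simpa [hKdef] using h0

lemma fmcont_csup {f : M → M} (hf : FMCont f) {K : ℕ → M} (hK : Monotone K) :
    f (csup K) = csup (fun i => f (K i)) := by
  refine ((isLUB_csup _ (fun a b hab => fmcont_mono hf (hK hab))).unique (hf K hK)).symm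

lemma csup_add_csup {K L : ℕ → M} (hK : Monotone K) (hL : Monotone L) :
    csup K + csup L = csup (fun i => K i + L i) := by
  have hKL : Monotone (fun i => K i + L i) := fun a b hab => add_le_add (hK hab) (hL hab)
  apply le_antisymm
  · have h1 : csup K + csup L = csup (fun i => K i + csup L) := by
      rw [add_comm, add_csup (csup L) K hK]
      exact csup_congr fun i => add_comm _ _
    rw [h1]
    refine csup_le (fun a b hab => add_le_add (hK hab) le_rfl) fun i => ?_
    rw [add_csup (K i) L hL]
    refine csup_le (fun a b hab => add_le_add le_rfl (hL hab)) fun j => ?_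
    calc K i + L j ≤ K (max i j) + L (max i j) :=
          add_le_add (hK (le_max_left _ _)) (hL (le_max_right _ _))
      _ ≤ csup (fun i => K i + L i) := le_csup _ hKL _
  · exact csup_le hKL fun i => add_le_add (le_csup K hK i) (le_csup L hL i)

lemma csup_finset_sum {α : Type} [DecidableEq α] (s : Finset α) (F : α → ℕ → M)
    (hF : ∀ a ∈ s, Monotone (F a)) :
    csup (fun i => ∑ a ∈ s, F a i) = ∑ a ∈ s, csup (F a) := by
  induction s using Finset.induction_on with
  | empty => simpa using csup_const (0 : M)
  | @insert a s ha ih =>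
    have hmono : Monotone (fun i => ∑ b ∈ s, F b i) := fun x y hxy =>
      Finset.sum_le_sum fun b hb => hF b (Finset.mem_insert_of_mem hb) hxy
    calc csup (fun i => ∑ b ∈ insert a s, F b i)
        = csup (fun i => F a i + ∑ b ∈ s, F b i) :=
          csup_congr fun i => Finset.sum_insert ha
      _ = csup (F a) + csup (fun i => ∑ b ∈ s, F b i) :=
          (csup_add_csup (hF a (Finset.mem_insert_self a s)) hmono).symm
      _ = ∑ b ∈ insert a s, csup (F b) := by
          rw [ih fun b hb => hF b (Finset.mem_insert_of_mem hb), Finset.sum_insert ha]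

lemma csup_comm (D : ℕ → ℕ → M) (h1 : ∀ n, Monotone (D n)) (h2 : ∀ m, Monotone (fun n => D n m)) :
    csup (fun n => csup (D n)) = csup (fun m => csup (fun n => D n m)) := by
  have hmono1 : Monotone (fun n => csup (D n)) := fun a b hab =>
    csup_mono (h1 a) (h1 b) fun i => h2 i hab
  have hmono2 : Monotone (fun m => csup (fun n => D n m)) := fun a b hab =>
    csup_mono (h2 a) (h2 b) fun n => h1 n hab
  apply le_antisymm
  · refine csup_le hmono1 fun n => csup_le (h1 n) fun m => ?_
    exact le_trans (le_csup _ (h2 m) n) (le_csup _ hmono2 m)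
  · refine csup_le hmono2 fun m => csup_le (h2 m) fun n => ?_
    exact le_trans (le_csup _ (h1 n) m) (le_csup _ hmono1 n)

end FMLemmas
section FGLemmas

open FlowMonoid FlowGraph

variable {M : Type u} [FlowMonoid M]

/-- The Kleene iterates of the flow computation. -/
noncomputable def FlowGraph.iter (h : FlowGraph M) (i : ℕ → ℕ → M) (n : ℕ) : ℕ → M :=
  (h.stepWith i)^[n] (fun _ => 0)

lemma FlowGraph.emono (h : FlowGraph M) {x y : ℕ} (hx : x ∈ h.X) : Monotone (h.E x y) :=
  fmcont_mono (h.econt x y hx)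

namespace FlowGraph

variable (h : FlowGraph M) (i : ℕ → ℕ → M)

lemma stepWith_congrOn {c d : ℕ → M} (hcd : ∀ y ∈ h.X, c y = d y) (x : ℕ) :
    h.stepWith i c x = h.stepWith i d x := by
  unfold stepWith
  by_cases hx : x ∈ h.X
  · simp only [if_pos hx]
    congr 1
    exact Finset.sum_congr rfl fun y hy => by rw [hcd y hy]
  · simp [hx]

lemma stepWith_mono {c d : ℕ → M} (hcd : ∀ y, c y ≤ d y) (x : ℕ) :
    h.stepWith i c x ≤ h.stepWith i d x := by
  unfold stepWith
  by_cases hx : x ∈ h.X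
  · simp only [if_pos hx]
    exact add_le_add le_rfl (Finset.sum_le_sum fun y hy => h.emono hy (hcd y))
  · simp [hx]

lemma stepWith_mono_inflow {i' : ℕ → ℕ → M}
    (hii : ∀ x ∈ h.X, (∑ᶠ y, i y x) ≤ ∑ᶠ y, i' y x) (c : ℕ → M) (x : ℕ) :
    h.stepWith i c x ≤ h.stepWith i' c x := by
  unfold stepWith
  by_cases hx : x ∈ h.X
  · simp only [if_pos hx]
    exact add_le_add (hii x hx) le_rfl
  · simp [hx]

lemma stepWith_congr_inflow {i' : ℕ → ℕ → M}
    (hii : ∀ x ∈ h.X, (∑ᶠ y, i y x) = ∑ᶠ y, i' y x) (c : ℕ → M) (x : ℕ) :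
    h.stepWith i c x = h.stepWith i' c x := by
  unfold stepWith
  by_cases hx : x ∈ h.X
  · simp only [if_pos hx, hii x hx]
  · simp [hx]

lemma iter_succ (n : ℕ) : h.iter i (n + 1) = h.stepWith i (h.iter i n) :=
  Function.iterate_succ_apply' _ _ _

lemma iter_le_succ (n : ℕ) (x : ℕ) : h.iter i n x ≤ h.iter i (n + 1) x := by
  induction n generalizing x with
  | zero => exact zero_le
  | succ n ih =>
    rw [iter_succ, iter_succ]
    exact h.stepWith_mono i (fun y => ih y) x

lemma iter_mono (x : ℕ) : Monotone (fun n => h.iter i n x) :=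
  monotone_nat_of_le_succ fun n => h.iter_le_succ i n x

lemma iter_off {x : ℕ} (hx : x ∉ h.X) (n : ℕ) : h.iter i n x = 0 := by
  cases n with
  | zero => rfl
  | succ n => rw [iter_succ]; unfold stepWith; simp [hx]

lemma flowWith_eq_csup (x : ℕ) : h.flowWith i x = csup (fun n => h.iter i n x) := rfl

lemma flowWith_off {x : ℕ} (hx : x ∉ h.X) : h.flowWith i x = 0 := by
  rw [flowWith_eq_csup]
  rw [csup_congr fun n => h.iter_off i hx n]
  exact csup_const 0

lemma iter_le_flowWith (n : ℕ) (x : ℕ) : h.iter i n x ≤ h.flowWith i x :=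
  le_csup _ (h.iter_mono i x) n

lemma flowWith_le {c : ℕ → M} (hc : ∀ x, h.stepWith i c x ≤ c x) (x : ℕ) :
    h.flowWith i x ≤ c x := by
  have key : ∀ n x, h.iter i n x ≤ c x := by
    intro n
    induction n with
    | zero => intro x; exact zero_le
    | succ n ih =>
      intro x
      rw [iter_succ]
      exact le_trans (h.stepWith_mono i ih x) (hc x)
  exact csup_le (h.iter_mono i x) fun n => key n x

/-- Continuity of the step function on ascending chains. -/
lemma stepWith_csup (Ch : ℕ → (ℕ → M)) (asc : ∀ n x, Ch n x ≤ Ch (n + 1) x) (x : ℕ) :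
    h.stepWith i (fun y => csup fun n => Ch n y) x = csup (fun n => h.stepWith i (Ch n) x) := by
  have hmono : ∀ y, Monotone (fun n => Ch n y) := fun y =>
    monotone_nat_of_le_succ fun n => asc n y
  unfold stepWith
  by_cases hx : x ∈ h.X
  · simp only [if_pos hx]
    have h1 : ∀ y ∈ h.X, h.E y x (csup fun n => Ch n y) = csup (fun n => h.E y x (Ch n y)) :=
      fun y hy => fmcont_csup (h.econt y x hy) (hmono y)
    rw [Finset.sum_congr rfl h1]
    rw [← csup_finset_sum h.X (fun y n => h.E y x (Ch n y))
      (fun y hy => fun a b hab => h.emono hy (hmono y hab))]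
    rw [add_csup _ _ (fun a b hab => Finset.sum_le_sum fun y hy => h.emono hy (hmono y hab))]
  · simp only [if_neg hx]
    exact (csup_const 0).symm

/-- The flow equation: `flowWith` is a fixed point of the step function. -/
lemma flowWith_fix (x : ℕ) : h.stepWith i (h.flowWith i) x = h.flowWith i x := by
  have : h.flowWith i = fun y => csup fun n => h.iter i n y := rfl
  rw [this, h.stepWith_csup i (h.iter i) (fun n x => h.iter_le_succ i n x) x]
  have h2 : ∀ n, h.stepWith i (h.iter i n) x = h.iter i (n + 1) x := fun n => by
    rw [iter_succ]
  rw [csup_congr h2]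
  exact csup_shift (h.iter_mono i x)

lemma flowWith_spec {x : ℕ} (hx : x ∈ h.X) :
    h.flowWith i x = (∑ᶠ y, i y x) + ∑ y ∈ h.X, h.E y x (h.flowWith i y) := by
  conv_lhs => rw [← h.flowWith_fix i x]
  unfold stepWith
  rw [if_pos hx]

lemma flowWith_mono_inflow {i' : ℕ → ℕ → M}
    (hii : ∀ x ∈ h.X, (∑ᶠ y, i y x) ≤ ∑ᶠ y, i' y x) (x : ℕ) :
    h.flowWith i x ≤ h.flowWith i' x := by
  refine h.flowWith_le i (fun x => ?_) x
  calc h.stepWith i (h.flowWith i') x ≤ h.stepWith i' (h.flowWith i') x :=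
        h.stepWith_mono_inflow i hii _ x
    _ = h.flowWith i' x := h.flowWith_fix i' x

lemma flowWith_congr_inflow {i' : ℕ → ℕ → M}
    (hii : ∀ x ∈ h.X, (∑ᶠ y, i y x) = ∑ᶠ y, i' y x) (x : ℕ) :
    h.flowWith i x = h.flowWith i' x :=
  le_antisymm (h.flowWith_mono_inflow i (fun x hx => le_of_eq (hii x hx)) x)
    (h.flowWith_mono_inflow i' (fun x hx => le_of_eq (hii x hx).symm) x)

end FlowGraph

end FGLemmas
/-- The pointwise join of an ascending chain of functions `X → M`. -/
noncomputable def chainJoin {X : Finset ℕ} (Ch : ℕ → ({x : ℕ // x ∈ X} → M)) :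
    {x : ℕ // x ∈ X} → M :=
  fun x => FlowMonoid.csup fun i => Ch i x

/-- `≤`-continuity of a function on `X → M`: it commutes with joins of
pointwise-ascending chains. -/
def ContOn (X : Finset ℕ)
    (f : ({x : ℕ // x ∈ X} → M) → ({x : ℕ // x ∈ X} → M)) : Prop :=
  ∀ Ch : ℕ → ({x : ℕ // x ∈ X} → M), (∀ i x, Ch i x ≤ Ch (i + 1) x) →
    ∀ x, IsLUB (Set.range fun i => f (Ch i) x) (f (chainJoin Ch) x)

/-- Pointwise `≤`-monotonicity of a function on `X → M`. -/
def MonoOn (X : Finset ℕ)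
    (f : ({x : ℕ // x ∈ X} → M) → ({x : ℕ // x ∈ X} → M)) : Prop :=
  ∀ c d : {x : ℕ // x ∈ X} → M, (∀ x, c x ≤ d x) → ∀ x, f c x ≤ f d x

/-- Pointwise `⪯`-monotonicity of a function on `X → M`. -/
def RMonoOn (r : M → M → Prop) (X : Finset ℕ)
    (f : ({x : ℕ // x ∈ X} → M) → ({x : ℕ // x ∈ X} → M)) : Prop :=
  ∀ c d : {x : ℕ // x ∈ X} → M, (∀ x, r (c x) (d x)) → ∀ x, r (f c x) (f d x)

/-- The join of the Kleene chain `⨆ᵢ fⁱ(⊥)` of a function on `X → M`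
(`⊥` is the constant-0 function); for continuous `f` this is `lfp(f)`. -/
noncomputable def kleeneOn {X : Finset ℕ}
    (f : ({x : ℕ // x ∈ X} → M) → ({x : ℕ // x ∈ X} → M)) : {x : ℕ // x ∈ X} → M :=
  fun x => FlowMonoid.csup fun i => (f^[i] fun _ => 0) x

/-- Condition (C4): for all `≤`-continuous, pointwise-`⪯`-monotone functions
`f, g` on `X → M` with `fⁱ(⊥)` pointwise-`⪯` `gⁱ(⊥)` for all `i` and
`lfp(f)` pointwise-`⪯` `g(lfp(f))`, one has `⨆ᵢ fⁱ(⊥)` pointwise-`⪯` `⨆ᵢ gⁱ(⊥)`. -/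
def C4 (r : M → M → Prop) (X : Finset ℕ) : Prop :=
  ∀ f g : ({x : ℕ // x ∈ X} → M) → ({x : ℕ // x ∈ X} → M),
    ContOn X f → ContOn X g → RMonoOn r X f → RMonoOn r X g →
    (∀ (i : ℕ) (x : {x : ℕ // x ∈ X}), r ((f^[i] fun _ => 0) x) ((g^[i] fun _ => 0) x)) →
    (∀ x, r (kleeneOn f x) (g (kleeneOn f) x)) →
    ∀ x, r (kleeneOn f x) (kleeneOn g x)

/-- `compatible_⪯(h)`: conditions (C1)–(C4) of the relation `⪯` with respect to
the flow graph `h`. -/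
def Compatible (r : M → M → Prop) (h : FlowGraph M) : Prop :=
  -- (C1) transitive and `0 ⪯ 0`
  (∀ m n o : M, r m n → r n o → r m o) ∧ r 0 0 ∧
  -- (C2) compatible with addition
  (∀ m n o : M, r m n → r (m + o) (n + o)) ∧
  -- (C3) the edge functions of `h` are `⪯`-monotone
  (∀ x y : ℕ, x ∈ h.X → ∀ m n : M, r m n → r (h.E x y m) (h.E x y n)) ∧
  -- (C4)
  C4 r h.X
/-- The estimator induced on flow graphs: same nodes, same inflow, and the
transfer functions are related for every smaller inflow. -/
def ctxLe (r : M → M → Prop) (s₁ s₂ : FlowGraph M) : Prop :=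
  s₁.X = s₂.X ∧ s₁.inflow = s₂.inflow ∧
  ∀ i : ℕ → ℕ → M, (∀ y x, i y x ≤ s₁.inflow y x) →
    ∀ y, y ∉ s₁.X → r (s₁.tf i y) (s₂.tf i y)

/-- `inflowLe r Y X i₁ i₂` is the relation `i₁ ⪯^Y i₂` on inflows over node set
`X`: the inflows agree on all sources outside `Y`, and for each target the sums
of the contributions from `Y` are related by `r`. -/
def inflowLe (r : M → M → Prop) (Y X : Finset ℕ) (i₁ i₂ : ℕ → ℕ → M) : Prop :=
  (∀ y, y ∉ Y → ∀ x, i₁ y x = i₂ y x) ∧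
  (∀ x ∈ X, r (∑ y ∈ Y, i₁ y x) (∑ y ∈ Y, i₂ y x))

/-- The `⪯`-upward `Y`-closure of a flow graph: all graphs obtained from `h` by
replacing its inflow with a `⪯^Y`-larger one. -/
def closureSet (r : M → M → Prop) (Y : Finset ℕ) (h : FlowGraph M) :
    Set (FlowGraph M) :=
  {h' | h'.X = h.X ∧ h'.E = h.E ∧ inflowLe r Y h.X h.inflow h'.inflow}

section RLemmas

open FlowMonoid FlowGraph

variable {M : Type u} [FlowMonoid M]

lemma rrefl {r : M → M → Prop} (h00 : r 0 0)
    (hadd : ∀ m n o : M, r m n → r (m + o) (n + o)) (m : M) : r m m := by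
  have := hadd 0 0 m h00
  simpa using this

lemma radd2 {r : M → M → Prop} (htr : ∀ m n o : M, r m n → r n o → r m o)
    (hadd : ∀ m n o : M, r m n → r (m + o) (n + o))
    {m n o p : M} (h1 : r m n) (h2 : r o p) : r (m + o) (n + p) := by
  refine htr _ (n + o) _ (hadd m n o h1) ?_
  have := hadd o p n h2
  rwa [add_comm o n, add_comm p n] at this

lemma rsum {r : M → M → Prop} (htr : ∀ m n o : M, r m n → r n o → r m o)
    (h00 : r 0 0) (hadd : ∀ m n o : M, r m n → r (m + o) (n + o))
    {α : Type} [DecidableEq α] (s : Finset α) (f g : α → M)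
    (h : ∀ a ∈ s, r (f a) (g a)) : r (∑ a ∈ s, f a) (∑ a ∈ s, g a) := by
  induction s using Finset.induction_on with
  | empty => simpa using h00
  | @insert a s ha ih =>
    rw [Finset.sum_insert ha, Finset.sum_insert ha]
    exact radd2 htr hadd (h a (Finset.mem_insert_self a s))
      (ih fun b hb => h b (Finset.mem_insert_of_mem hb))

/-- Extend a function on the nodes of `X` to all of `ℕ` by zero. -/
noncomputable def extendOn (X : Finset ℕ) (c : {x : ℕ // x ∈ X} → M) : ℕ → M :=
  fun n => if hn : n ∈ X then c ⟨n, hn⟩ else 0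

lemma extendOn_mem (X : Finset ℕ) (c : {x : ℕ // x ∈ X} → M) {y : ℕ} (hy : y ∈ X) :
    extendOn X c y = c ⟨y, hy⟩ := dif_pos hy

/-- The Kleene iteration of the subtype step function agrees with `iter`. -/
lemma subIter (h : FlowGraph M) (i : ℕ → ℕ → M) (n : ℕ) (x : {x : ℕ // x ∈ h.X}) :
    ((fun (c : {x : ℕ // x ∈ h.X} → M) x => h.stepWith i (extendOn h.X c) x.val)^[n]
      (fun _ => 0)) x = h.iter i n x.val := by
  induction n generalizing x with
  | zero => rfl
  | succ n ih =>
    rw [Function.iterate_succ_apply', iter_succ]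
    exact h.stepWith_congrOn i (fun y hy => by rw [extendOn_mem h.X _ hy, ih ⟨y, hy⟩]) x.val

lemma subCont (h : FlowGraph M) (i : ℕ → ℕ → M) :
    ContOn h.X (fun (c : {x : ℕ // x ∈ h.X} → M) x => h.stepWith i (extendOn h.X c) x.val) := by
  intro Ch asc x
  have he : extendOn h.X (chainJoin Ch) = fun y => csup (fun n => extendOn h.X (Ch n) y) := by
    funext y
    by_cases hy : y ∈ h.X
    · rw [extendOn_mem h.X _ hy]
      exact csup_congr fun n => (extendOn_mem h.X _ hy).symm
    · unfold extendOn
      rw [dif_neg hy]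
      rw [csup_congr fun n => (dif_neg hy : _ = (0 : M))]
      exact (csup_const 0).symm
  have asc' : ∀ n y, extendOn h.X (Ch n) y ≤ extendOn h.X (Ch (n + 1)) y := by
    intro n y
    unfold extendOn
    by_cases hy : y ∈ h.X
    · rw [dif_pos hy, dif_pos hy]; exact asc n ⟨y, hy⟩
    · simp [hy]
  have key : h.stepWith i (extendOn h.X (chainJoin Ch)) x.val =
      csup (fun n => h.stepWith i (extendOn h.X (Ch n)) x.val) := by
    rw [he]
    exact h.stepWith_csup i _ asc' x.val
  show IsLUB (Set.range fun n => h.stepWith i (extendOn h.X (Ch n)) x.val)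
    (h.stepWith i (extendOn h.X (chainJoin Ch)) x.val)
  rw [key]
  exact isLUB_csup _ (monotone_nat_of_le_succ fun n =>
    h.stepWith_mono i (fun y => asc' n y) x.val)

lemma subMono (h : FlowGraph M) (i : ℕ → ℕ → M) :
    MonoOn h.X (fun (c : {x : ℕ // x ∈ h.X} → M) x => h.stepWith i (extendOn h.X c) x.val) := by
  intro c d hcd x
  refine h.stepWith_mono i (fun y => ?_) x.val
  unfold extendOn
  by_cases hy : y ∈ h.X
  · rw [dif_pos hy, dif_pos hy]; exact hcd ⟨y, hy⟩
  · simp [hy]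

/-- Key lemma: the flows with `r`-related inflows are `r`-related (C4 application). -/
lemma flow_r_mono (r : M → M → Prop) (h : FlowGraph M) (hc : Compatible r h)
    (a b : ℕ → ℕ → M)
    (hab : ∀ x ∈ h.X, r (∑ᶠ y, a y x) (∑ᶠ y, b y x)) :
    ∀ x ∈ h.X, r (h.flowWith a x) (h.flowWith b x) := by
  obtain ⟨htr, h00, hadd, hmono, hc4⟩ := hc
  set f : ({x : ℕ // x ∈ h.X} → M) → ({x : ℕ // x ∈ h.X} → M) :=
    fun c x => h.stepWith a (extendOn h.X c) x.val with hfdef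
  set g : ({x : ℕ // x ∈ h.X} → M) → ({x : ℕ // x ∈ h.X} → M) :=
    fun c x => h.stepWith b (extendOn h.X c) x.val with hgdef
  have hext : ∀ (c d : {x : ℕ // x ∈ h.X} → M), (∀ x, r (c x) (d x)) →
      ∀ y ∈ h.X, r (extendOn h.X c y) (extendOn h.X d y) := by
    intro c d hcd y hy
    rw [extendOn_mem h.X _ hy, extendOn_mem h.X _ hy]
    exact hcd _
  have hstepr : ∀ (i1 i2 : ℕ → ℕ → M), (∀ x ∈ h.X, r (∑ᶠ y, i1 y x) (∑ᶠ y, i2 y x)) →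
      ∀ (c d : ℕ → M), (∀ y ∈ h.X, r (c y) (d y)) →
      ∀ x ∈ h.X, r (h.stepWith i1 c x) (h.stepWith i2 d x) := by
    intro i1 i2 h12 c d hcd x hx
    unfold FlowGraph.stepWith
    rw [if_pos hx, if_pos hx]
    exact radd2 htr hadd (h12 x hx)
      (rsum htr h00 hadd h.X _ _ fun y hy => hmono y x hy _ _ (hcd y hy))
  have hrmf : RMonoOn r h.X f := fun c d hcd x =>
    hstepr a a (fun x hx => rrefl h00 hadd _) _ _ (hext c d hcd) x.val x.2
  have hrmg : RMonoOn r h.X g := fun c d hcd x =>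
    hstepr b b (fun x hx => rrefl h00 hadd _) _ _ (hext c d hcd) x.val x.2
  have hit : ∀ (n : ℕ) (x : {x : ℕ // x ∈ h.X}),
      r ((f^[n] fun _ => 0) x) ((g^[n] fun _ => 0) x) := by
    have key : ∀ n, ∀ x ∈ h.X, r (h.iter a n x) (h.iter b n x) := by
      intro n
      induction n with
      | zero => intro x hx; exact h00
      | succ n ih =>
        intro x hx
        rw [iter_succ, iter_succ]
        exact hstepr a b hab _ _ (fun y hy => ih y hy) x hx
    intro n x
    rw [hfdef, hgdef, subIter, subIter]
    exact key n x.val x.2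
  have hkf : ∀ x, kleeneOn f x = h.flowWith a x.val := by
    intro x
    unfold kleeneOn
    exact csup_congr fun n => subIter h a n x
  have hkg : ∀ x, kleeneOn g x = h.flowWith b x.val := by
    intro x
    unfold kleeneOn
    exact csup_congr fun n => subIter h b n x
  have hlfp : ∀ x, r (kleeneOn f x) (g (kleeneOn f) x) := by
    intro x
    rw [hkf]
    have h1 : h.flowWith a x.val = h.stepWith a (h.flowWith a) x.val :=
      (h.flowWith_fix a x.val).symm
    have h2 : g (kleeneOn f) x = h.stepWith b (h.flowWith a) x.val := by
      rw [hgdef]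
      exact h.stepWith_congrOn b (fun y hy => by rw [extendOn_mem h.X _ hy, hkf ⟨y, hy⟩]) x.val
    rw [h1, h2]
    exact hstepr a b hab _ _ (fun y hy => rrefl h00 hadd _) x.val x.2
  have := hc4 f g (subCont h a) (subCont h b) hrmf hrmg hit hlfp
  intro x hx
  have hx' := this ⟨x, hx⟩
  rwa [hkf, hkg] at hx'

end RLemmas
section DecLemmas

open FlowMonoid FlowGraph

variable {M : Type u} [FlowMonoid M]

lemma finsum_piecewise (s : Finset ℕ) (A B : ℕ → M) (hB : (Function.support B).Finite) :
    ∑ᶠ y, (if y ∈ s then A y else B y) =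
      (∑ y ∈ s, A y) + ∑ᶠ y, (if y ∈ s then 0 else B y) := by
  have hsplit : (fun y => if y ∈ s then A y else B y) =
      fun y => (if y ∈ s then A y else 0) + (if y ∈ s then (0 : M) else B y) := by
    funext y
    by_cases hy : y ∈ s <;> simp [hy]
  rw [hsplit]
  have h1 : (Function.support fun y => if y ∈ s then A y else 0).Finite := by
    apply Set.Finite.subset s.finite_toSet
    intro y hy
    rw [Function.mem_support] at hy
    by_contra hys
    rw [if_neg (fun hmem => hys (Finset.mem_coe.mpr hmem))] at hy
    exact hy rfl
  have h2 : (Function.support fun y => if y ∈ s then (0 : M) else B y).Finite := by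
    apply Set.Finite.subset hB
    intro y hy
    rw [Function.mem_support] at hy
    rw [Function.mem_support]
    intro hB0
    simp [hB0] at hy
  rw [finsum_add_distrib h1 h2]
  congr 1
  rw [finsum_eq_sum_of_support_subset _ (s := s)]
  · exact Finset.sum_congr rfl fun y hy => if_pos hy
  · intro y hy
    rw [Function.mem_support] at hy
    by_contra hys
    rw [if_neg (fun hmem => hys (Finset.mem_coe.mpr hmem))] at hy
    exact hy rfl

lemma FlowGraph.iter_mono_inflow (h : FlowGraph M) {i i' : ℕ → ℕ → M}
    (hii : ∀ x ∈ h.X, (∑ᶠ y, i y x) ≤ ∑ᶠ y, i' y x) (n : ℕ) (x : ℕ) :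
    h.iter i n x ≤ h.iter i' n x := by
  induction n generalizing x with
  | zero => exact le_rfl
  | succ n ih =>
    rw [iter_succ, iter_succ]
    exact le_trans (h.stepWith_mono_inflow i hii _ x)
      (h.stepWith_mono i' (fun y => ih y) x)

section Kleene

variable {X : Finset ℕ} (F : ({x : ℕ // x ∈ X} → M) → ({x : ℕ // x ∈ X} → M))

lemma kleene_iter_asc (hmono : MonoOn X F) (n : ℕ) (x : {x : ℕ // x ∈ X}) :
    (F^[n] fun _ => 0) x ≤ (F^[n + 1] fun _ => 0) x := by
  induction n generalizing x with
  | zero => exact zero_le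
  | succ n ih =>
    rw [Function.iterate_succ_apply', Function.iterate_succ_apply']
    exact hmono _ _ (fun y => ih y) x

lemma kleene_iter_mono (hmono : MonoOn X F) (x : {x : ℕ // x ∈ X}) :
    Monotone (fun n => (F^[n] fun _ => 0) x) :=
  monotone_nat_of_le_succ fun n => kleene_iter_asc F hmono n x

lemma le_kleene (hmono : MonoOn X F) (n : ℕ) (x : {x : ℕ // x ∈ X}) :
    (F^[n] fun _ => 0) x ≤ kleeneOn F x :=
  le_csup _ (kleene_iter_mono F hmono x) n

lemma kleene_le (hmono : MonoOn X F) (c : {x : ℕ // x ∈ X} → M)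
    (hc : ∀ x, F c x ≤ c x) (x : {x : ℕ // x ∈ X}) : kleeneOn F x ≤ c x := by
  have key : ∀ n x, (F^[n] fun _ => 0) x ≤ c x := by
    intro n
    induction n with
    | zero => intro x; exact zero_le
    | succ n ih =>
      intro x
      rw [Function.iterate_succ_apply']
      exact le_trans (hmono _ _ ih x) (hc x)
  exact csup_le (kleene_iter_mono F hmono x) fun n => key n x

lemma kleene_fix (hcont : ContOn X F) (hmono : MonoOn X F) (x : {x : ℕ // x ∈ X}) :
    F (kleeneOn F) x = kleeneOn F x := by
  have hCh : ∀ (n : ℕ) (y : {x : ℕ // x ∈ X}),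
      (F^[n] fun _ => 0) y ≤ (F^[n + 1] fun _ => 0) y := kleene_iter_asc F hmono
  have hkj : kleeneOn F = chainJoin (fun n => F^[n] fun _ => 0) := rfl
  have h1 := hcont (fun n => F^[n] fun _ => 0) hCh x
  rw [← hkj] at h1
  have h2 : F (kleeneOn F) x = csup (fun n => F (F^[n] fun _ => 0) x) :=
    csup_eq_of_isLUB (monotone_nat_of_le_succ fun n =>
      hmono _ _ (fun y => hCh n y) x) h1 |>.symm
  rw [h2]
  have h3 : ∀ n, F (F^[n] fun _ => 0) x = (F^[n + 1] fun _ => 0) x := fun n =>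
    (congrFun (Function.iterate_succ_apply' F n _) x).symm
  rw [csup_congr h3]
  exact csup_shift (kleene_iter_mono F hmono x)

end Kleene

/-- Decomposition: the flow of a composite graph restricted to a subgraph `p`
is the flow of `p` with the induced inflow. -/
lemma flow_decompose (g p : FlowGraph M) (i : ℕ → ℕ → M)
    (hsub : p.X ⊆ g.X) (hE : ∀ y ∈ p.X, g.E y = p.E y)
    (hi0 : ∀ y ∈ g.X, ∀ x, i y x = 0)
    (hifin : ∀ x, (Function.support fun y => i y x).Finite) :
    (∀ x, p.flowWith (fun y x => if x ∈ p.X then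
        (if y ∈ g.X \ p.X then g.E y x (g.flowWith i y) else
          if y ∈ p.X then 0 else i y x) else 0) x ≤ g.flowWith i x) ∧
    ∀ x ∈ p.X, g.flowWith i x =
      p.flowWith (fun y x => if x ∈ p.X then
        (if y ∈ g.X \ p.X then g.E y x (g.flowWith i y) else
          if y ∈ p.X then 0 else i y x) else 0) x := by
  set fl := g.flowWith i with hfl
  set ip : ℕ → ℕ → M := fun y x => if x ∈ p.X then
    (if y ∈ g.X \ p.X then g.E y x (fl y) else if y ∈ p.X then 0 else i y x) else 0 with hip
  have tot : ∀ x ∈ p.X, (∑ᶠ y, ip y x) =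
      (∑ y ∈ g.X \ p.X, g.E y x (fl y)) + ∑ᶠ y, i y x := by
    intro x hx
    have h1 : (fun y => ip y x) = fun y => if y ∈ g.X \ p.X then g.E y x (fl y)
        else (if y ∈ p.X then 0 else i y x) := by
      funext y; rw [hip]; simp only [if_pos hx]
    rw [h1, finsum_piecewise (g.X \ p.X) _ _ ?hBfin]
    case hBfin =>
      apply Set.Finite.subset (hifin x)
      intro y hy
      rw [Function.mem_support] at hy ⊢
      intro h0
      simp [h0] at hy
    congr 1
    apply finsum_congr
    intro y
    by_cases h1 : y ∈ g.X \ p.X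
    · rw [if_pos h1]
      exact (hi0 y (Finset.mem_sdiff.mp h1).1 x).symm
    · rw [if_neg h1]
      by_cases h2 : y ∈ p.X
      · rw [if_pos h2]
        exact (hi0 y (hsub h2) x).symm
      · rw [if_neg h2]
  have split : ∀ (x : ℕ) (c : ℕ → M), (∑ y ∈ g.X, g.E y x (c y)) =
      (∑ y ∈ p.X, p.E y x (c y)) + ∑ y ∈ g.X \ p.X, g.E y x (c y) := by
    intro x c
    rw [← Finset.sum_sdiff hsub, add_comm]
    congr 1
    exact Finset.sum_congr rfl fun y hy => by rw [hE y hy]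
  -- direction 1
  have dir1 : ∀ x, p.flowWith ip x ≤ fl x := by
    refine fun x => p.flowWith_le ip (fun x => ?_) x
    unfold FlowGraph.stepWith
    by_cases hx : x ∈ p.X
    · rw [if_pos hx, tot x hx]
      have : (∑ y ∈ g.X \ p.X, g.E y x (fl y)) + (∑ᶠ y, i y x) +
          ∑ y ∈ p.X, p.E y x (fl y) =
          (∑ᶠ y, i y x) + ∑ y ∈ g.X, g.E y x (fl y) := by
        rw [split x fl]; abel
      rw [this]
      have heq : (∑ᶠ y, i y x) + ∑ y ∈ g.X, g.E y x (fl y) = fl x := by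
        rw [hfl, ← g.flowWith_fix i x]
        unfold FlowGraph.stepWith
        rw [if_pos (hsub hx)]
      exact le_of_eq heq
    · rw [if_neg hx]; exact zero_le
  refine ⟨dir1, ?_⟩
  -- direction 2
  intro x hx
  refine le_antisymm ?_ (dir1 x)
  set B : ℕ → M := fun x => if x ∈ p.X then p.flowWith ip x else fl x with hB
  have hBle : ∀ y, B y ≤ fl y := by
    intro y
    simp only [hB]
    by_cases hy : y ∈ p.X
    · rw [if_pos hy]; exact dir1 y
    · rw [if_neg hy]
  have key : ∀ n x, g.iter i n x ≤ B x := by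
    intro n
    induction n with
    | zero => intro x; exact zero_le
    | succ n ih =>
      intro x
      rw [iter_succ]
      refine le_trans (g.stepWith_mono i (fun y => ih y) x) ?_
      by_cases hxp : x ∈ p.X
      · have hgoal : B x = p.flowWith ip x := by simp only [hB]; rw [if_pos hxp]
        rw [hgoal]
        unfold FlowGraph.stepWith
        rw [if_pos (hsub hxp)]
        have hle : (∑ᶠ y, i y x) + ∑ y ∈ g.X, g.E y x (B y) ≤
            (∑ᶠ y, i y x) + ((∑ y ∈ p.X, p.E y x (p.flowWith ip y)) +
              ∑ y ∈ g.X \ p.X, g.E y x (fl y)) := by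
          rw [split x B]
          refine add_le_add le_rfl (add_le_add ?_ ?_)
          · refine Finset.sum_le_sum fun y hy => p.emono hy ?_
            have : B y = p.flowWith ip y := by simp only [hB]; rw [if_pos hy]
            rw [this]
          · refine Finset.sum_le_sum fun y hy => ?_
            have hyg : y ∈ g.X := (Finset.mem_sdiff.mp hy).1
            exact fmcont_mono (g.econt y x hyg) (hBle y)
        refine le_trans hle ?_
        have heq : (∑ᶠ y, i y x) + ((∑ y ∈ p.X, p.E y x (p.flowWith ip y)) +
            ∑ y ∈ g.X \ p.X, g.E y x (fl y)) =
            (∑ᶠ y, ip y x) + ∑ y ∈ p.X, p.E y x (p.flowWith ip y) := by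
          rw [tot x hxp]; abel
        rw [heq]
        have := p.flowWith_fix ip x
        unfold FlowGraph.stepWith at this
        rw [if_pos hxp] at this
        exact le_of_eq this
      · have hgoal : B x = fl x := by simp only [hB]; rw [if_neg hxp]
        rw [hgoal]
        refine le_trans (g.stepWith_mono i (fun y => hBle y) x) ?_
        exact le_of_eq (g.flowWith_fix i x)
  have : fl x = csup (fun n => g.iter i n x) := rfl
  rw [this]
  refine le_trans (csup_le (g.iter_mono i x) fun n => key n x) ?_
  have hgoal : B x = p.flowWith ip x := by simp only [hB]; rw [if_pos hx]
  rw [hgoal]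

end DecLemmas
section BekLemmas

open FlowMonoid FlowGraph

variable {M : Type u} [FlowMonoid M]

lemma extendOn_le (X : Finset ℕ) {c d : {x : ℕ // x ∈ X} → M} (hcd : ∀ x, c x ≤ d x)
    (y : ℕ) : extendOn X c y ≤ extendOn X d y := by
  unfold extendOn
  by_cases hy : y ∈ X
  · rw [dif_pos hy, dif_pos hy]; exact hcd _
  · simp [hy]

lemma extendOn_chainJoin (X : Finset ℕ) (Ch : ℕ → {x : ℕ // x ∈ X} → M) :
    extendOn X (chainJoin Ch) = fun y => csup (fun n => extendOn X (Ch n) y) := by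
  funext y
  by_cases hy : y ∈ X
  · rw [extendOn_mem X _ hy]
    exact csup_congr fun n => (extendOn_mem X _ hy).symm
  · unfold extendOn
    rw [dif_neg hy, csup_congr fun n => (dif_neg hy : _ = (0 : M))]
    exact (csup_const 0).symm

lemma gmulE_left (s t : FlowGraph M) {y : ℕ} (hy : y ∈ s.X) :
    (gmul s t).E y = s.E y := funext fun z => if_pos hy

lemma gmulE_right (s t : FlowGraph M) (hd : Disjoint s.X t.X) {y : ℕ} (hy : y ∈ t.X) :
    (gmul s t).E y = t.E y := funext fun z => if_neg (Finset.disjoint_right.mp hd hy)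

lemma gmul_sum_split (s t : FlowGraph M) (hd : Disjoint s.X t.X) (c : ℕ → M) (x : ℕ) :
    (∑ y ∈ (gmul s t).X, (gmul s t).E y x (c y)) =
      (∑ y ∈ s.X, s.E y x (c y)) + ∑ y ∈ t.X, t.E y x (c y) := by
  have hX : (gmul s t).X = s.X ∪ t.X := rfl
  rw [hX, Finset.sum_union hd]
  congr 1
  · exact Finset.sum_congr rfl fun y hy => by rw [gmulE_left s t hy]
  · exact Finset.sum_congr rfl fun y hy => by rw [gmulE_right s t hd hy]

/-- The feedback inflow from `t` into `s`, given values `c` on the nodes of `t`. -/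
noncomputable def Jin (s t : FlowGraph M) (i : ℕ → ℕ → M)
    (c : {x : ℕ // x ∈ t.X} → M) : ℕ → ℕ → M :=
  fun y x => if x ∈ s.X then
    (if y ∈ t.X then t.E y x (extendOn t.X c y) else if y ∈ s.X then 0 else i y x) else 0

/-- The Bekić elimination of `s` from the composite `gmul s t`: a step function
on the nodes of `t` only. -/
noncomputable def Bek (s t : FlowGraph M) (i : ℕ → ℕ → M)
    (c : {x : ℕ // x ∈ t.X} → M) : {x : ℕ // x ∈ t.X} → M :=
  fun x => ((∑ᶠ y, i y x.val) + ∑ y ∈ t.X, t.E y x.val (extendOn t.X c y)) +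
    ∑ y ∈ s.X, s.E y x.val (s.flowWith (Jin s t i c) y)

variable (s t : FlowGraph M) (i : ℕ → ℕ → M)

lemma totalIn_Jin (hi0 : ∀ y ∈ s.X ∪ t.X, ∀ x, i y x = 0)
    (hifin : ∀ x, (Function.support fun y => i y x).Finite)
    (c : {x : ℕ // x ∈ t.X} → M) {x : ℕ} (hx : x ∈ s.X) :
    (∑ᶠ y, Jin s t i c y x) = (∑ᶠ y, i y x) + ∑ y ∈ t.X, t.E y x (extendOn t.X c y) := by
  have h1 : (fun y => Jin s t i c y x) = fun y =>
      if y ∈ t.X then t.E y x (extendOn t.X c y) else (if y ∈ s.X then 0 else i y x) := by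
    funext y; unfold Jin; rw [if_pos hx]
  rw [h1, finsum_piecewise t.X _ _ ?hBfin]
  case hBfin =>
    apply Set.Finite.subset (hifin x)
    intro y hy
    rw [Function.mem_support] at hy ⊢
    intro h0
    simp [h0] at hy
  rw [add_comm]
  congr 1
  apply finsum_congr
  intro y
  by_cases h1 : y ∈ t.X
  · rw [if_pos h1]
    exact (hi0 y (Finset.mem_union_right _ h1) x).symm
  · rw [if_neg h1]
    by_cases h2 : y ∈ s.X
    · rw [if_pos h2]
      exact (hi0 y (Finset.mem_union_left _ h2) x).symm
    · rw [if_neg h2]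

lemma jin_total_mono (hi0 : ∀ y ∈ s.X ∪ t.X, ∀ x, i y x = 0)
    (hifin : ∀ x, (Function.support fun y => i y x).Finite)
    {c d : {x : ℕ // x ∈ t.X} → M} (hcd : ∀ x, c x ≤ d x) :
    ∀ x ∈ s.X, (∑ᶠ y, Jin s t i c y x) ≤ ∑ᶠ y, Jin s t i d y x := by
  intro x hx
  rw [totalIn_Jin s t i hi0 hifin c hx, totalIn_Jin s t i hi0 hifin d hx]
  exact add_le_add le_rfl
    (Finset.sum_le_sum fun y hy => t.emono hy (extendOn_le t.X hcd y))

lemma bek_mono (hi0 : ∀ y ∈ s.X ∪ t.X, ∀ x, i y x = 0)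
    (hifin : ∀ x, (Function.support fun y => i y x).Finite) :
    MonoOn t.X (Bek s t i) := by
  intro c d hcd x
  unfold Bek
  refine add_le_add (add_le_add le_rfl
    (Finset.sum_le_sum fun y hy => t.emono hy (extendOn_le t.X hcd y)))
    (Finset.sum_le_sum fun y hy => s.emono hy ?_)
  exact s.flowWith_mono_inflow _ (jin_total_mono s t i hi0 hifin hcd) y

lemma bek_cont (hi0 : ∀ y ∈ s.X ∪ t.X, ∀ x, i y x = 0)
    (hifin : ∀ x, (Function.support fun y => i y x).Finite) :
    ContOn t.X (Bek s t i) := by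
  intro Ch asc x
  have hChm : ∀ n y, extendOn t.X (Ch n) y ≤ extendOn t.X (Ch (n + 1)) y := by
    intro n y
    unfold extendOn
    by_cases hy : y ∈ t.X
    · rw [dif_pos hy, dif_pos hy]; exact asc n ⟨y, hy⟩
    · simp [hy]
  have hChmono : ∀ (y : {x : ℕ // x ∈ t.X}), Monotone fun n => Ch n y := fun y =>
    monotone_nat_of_le_succ fun n => asc n y
  have hChle : ∀ a b, a ≤ b → ∀ (y : {x : ℕ // x ∈ t.X}), Ch a y ≤ Ch b y :=
    fun a b hab y => hChmono y hab
  -- continuity of the t-part sum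
  have sumT : ∀ z, (∑ y ∈ t.X, t.E y z (extendOn t.X (chainJoin Ch) y)) =
      csup (fun n => ∑ y ∈ t.X, t.E y z (extendOn t.X (Ch n) y)) := by
    intro z
    rw [extendOn_chainJoin]
    rw [Finset.sum_congr rfl (fun y hy =>
      fmcont_csup (t.econt y z hy) (monotone_nat_of_le_succ fun n => hChm n y))]
    exact (csup_finset_sum t.X _ fun y hy =>
      monotone_nat_of_le_succ fun n => t.emono hy (hChm n y)).symm
  have sumTmono : ∀ z, Monotone (fun n => ∑ y ∈ t.X, t.E y z (extendOn t.X (Ch n) y)) :=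
    fun z => monotone_nat_of_le_succ fun n =>
      Finset.sum_le_sum fun y hy => t.emono hy (hChm n y)
  have iterMonoN : ∀ (m : ℕ) (z : ℕ), Monotone (fun n => s.iter (Jin s t i (Ch n)) m z) :=
    fun m z => monotone_nat_of_le_succ fun n =>
      s.iter_mono_inflow (jin_total_mono s t i hi0 hifin fun w => asc n w) m z
  -- continuity of the inner iterates
  have iterCont : ∀ m y, s.iter (Jin s t i (chainJoin Ch)) m y =
      csup (fun n => s.iter (Jin s t i (Ch n)) m y) := by
    intro m
    induction m with
    | zero => intro y; exact (csup_const 0).symm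
    | succ m ih =>
      intro y
      by_cases hy : y ∈ s.X
      · rw [iter_succ]
        have hys : s.stepWith (Jin s t i (chainJoin Ch)) (s.iter (Jin s t i (chainJoin Ch)) m) y
            = ((∑ᶠ z, i z y) + ∑ z ∈ t.X, t.E z y (extendOn t.X (chainJoin Ch) z)) +
              ∑ z ∈ s.X, s.E z y (s.iter (Jin s t i (chainJoin Ch)) m z) := by
          unfold FlowGraph.stepWith
          rw [if_pos hy, totalIn_Jin s t i hi0 hifin _ hy]
        rw [hys, sumT y]
        have h2 : (∑ z ∈ s.X, s.E z y (s.iter (Jin s t i (chainJoin Ch)) m z)) =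
            csup (fun n => ∑ z ∈ s.X, s.E z y (s.iter (Jin s t i (Ch n)) m z)) := by
          rw [Finset.sum_congr rfl (fun z hz => by
            rw [ih z, fmcont_csup (s.econt z y hz) (iterMonoN m z)])]
          exact (csup_finset_sum s.X _ fun z hz =>
            fun a b hab => s.emono hz (iterMonoN m z hab)).symm
        rw [h2]
        rw [add_csup _ _ (sumTmono y)]
        rw [csup_add_csup (fun a b hab => add_le_add le_rfl (sumTmono y hab))
          (fun a b hab => Finset.sum_le_sum fun z hz => s.emono hz (iterMonoN m z hab))]
        refine csup_congr fun n => ?_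
        rw [iter_succ]
        unfold FlowGraph.stepWith
        rw [if_pos hy, totalIn_Jin s t i hi0 hifin _ hy]
      · -- y outside s.X : everything is 0
        rw [s.iter_off _ hy]
        rw [csup_congr fun n => (s.iter_off _ hy (m + 1) : _ = (0:M))]
        exact (csup_const 0).symm
  -- continuity of the inner flow
  have flowCont : ∀ z, s.flowWith (Jin s t i (chainJoin Ch)) z =
      csup (fun n => s.flowWith (Jin s t i (Ch n)) z) := by
    intro z
    have h1 : s.flowWith (Jin s t i (chainJoin Ch)) z =
        csup (fun m => csup (fun n => s.iter (Jin s t i (Ch n)) m z)) :=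
      csup_congr (fun m => iterCont m z)
    rw [h1]
    have h2 := csup_comm (fun n m => s.iter (Jin s t i (Ch n)) m z)
      (fun n => s.iter_mono _ z) (fun m => iterMonoN m z)
    rw [← h2]
    rfl
  have flowMonoN : ∀ z, Monotone (fun n => s.flowWith (Jin s t i (Ch n)) z) :=
    fun z => monotone_nat_of_le_succ fun n =>
      s.flowWith_mono_inflow _ (jin_total_mono s t i hi0 hifin fun w => asc n w) z
  -- assemble
  have key : Bek s t i (chainJoin Ch) x = csup (fun n => Bek s t i (Ch n) x) := by
    unfold Bek
    rw [sumT x.val]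
    have h3 : (∑ y ∈ s.X, s.E y x.val (s.flowWith (Jin s t i (chainJoin Ch)) y)) =
        csup (fun n => ∑ y ∈ s.X, s.E y x.val (s.flowWith (Jin s t i (Ch n)) y)) := by
      rw [Finset.sum_congr rfl (fun y hy => by
        rw [flowCont y, fmcont_csup (s.econt y x.val hy) (flowMonoN y)])]
      exact (csup_finset_sum s.X _ fun y hy =>
        fun a b hab => s.emono hy (flowMonoN y hab)).symm
    rw [h3, add_csup _ _ (sumTmono x.val)]
    rw [csup_add_csup (fun a b hab => add_le_add le_rfl (sumTmono x.val hab))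
      (fun a b hab => Finset.sum_le_sum fun y hy => s.emono hy (flowMonoN y hab))]
  rw [show (fun n => Bek s t i (Ch n) x) = fun n =>
    (fun (c : {x : ℕ // x ∈ t.X} → M) => Bek s t i c) (Ch n) x from rfl] at key
  show IsLUB (Set.range fun n => Bek s t i (Ch n) x) (Bek s t i (chainJoin Ch) x)
  rw [key]
  exact isLUB_csup _ (monotone_nat_of_le_succ fun n =>
    bek_mono s t i hi0 hifin (Ch n) (Ch (n + 1)) (fun y => asc n y) x)

lemma gmul_dec_left (hd : Disjoint s.X t.X)
    (hi0 : ∀ y ∈ s.X ∪ t.X, ∀ x, i y x = 0)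
    (hifin : ∀ x, (Function.support fun y => i y x).Finite) :
    ∀ x ∈ s.X, (gmul s t).flowWith i x =
      s.flowWith (Jin s t i (fun z => (gmul s t).flowWith i z.val)) x := by
  have hsub : s.X ⊆ (gmul s t).X := Finset.subset_union_left
  have hE : ∀ y ∈ s.X, (gmul s t).E y = s.E y := fun y hy => gmulE_left s t hy
  have hi0' : ∀ y ∈ (gmul s t).X, ∀ x, i y x = 0 := hi0
  have hdec := (flow_decompose (gmul s t) s i hsub hE hi0' hifin).2
  have hip : (fun (y x : ℕ) => if x ∈ s.X then
      (if y ∈ (gmul s t).X \ s.X then (gmul s t).E y x ((gmul s t).flowWith i y) else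
        if y ∈ s.X then 0 else i y x) else 0) =
      Jin s t i (fun z => (gmul s t).flowWith i z.val) := by
    funext y x
    unfold Jin
    by_cases hx : x ∈ s.X
    · rw [if_pos hx, if_pos hx]
      have hsd : ((gmul s t).X \ s.X) = t.X := Finset.union_sdiff_cancel_left hd
      by_cases hy : y ∈ t.X
      · rw [if_pos (show y ∈ (gmul s t).X \ s.X by rw [hsd]; exact hy), if_pos hy,
          gmulE_right s t hd hy, extendOn_mem t.X _ hy]
      · rw [if_neg (show y ∉ (gmul s t).X \ s.X by rw [hsd]; exact hy), if_neg hy]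
    · rw [if_neg hx, if_neg hx]
  intro x hx
  rw [hdec x hx, hip]

lemma bek_kleene (hd : Disjoint s.X t.X)
    (hi0 : ∀ y ∈ s.X ∪ t.X, ∀ x, i y x = 0)
    (hifin : ∀ x, (Function.support fun y => i y x).Finite) :
    ∀ x : {x : ℕ // x ∈ t.X}, kleeneOn (Bek s t i) x = (gmul s t).flowWith i x.val := by
  set fl := (gmul s t).flowWith i with hfl
  have hmono := bek_mono s t i hi0 hifin
  have hcont := bek_cont s t i hi0 hifin
  have hflspec : ∀ x ∈ t.X, fl x = ((∑ᶠ y, i y x) + ∑ y ∈ t.X, t.E y x (fl y)) +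
      ∑ y ∈ s.X, s.E y x (fl y) := by
    intro x hx
    have hxg : x ∈ (gmul s t).X := Finset.mem_union_right _ hx
    rw [hfl, (gmul s t).flowWith_spec i hxg, gmul_sum_split s t hd _ x]
    abel
  have hfix : ∀ x, Bek s t i (fun z => fl z.val) x = fl x.val := by
    intro x
    have h1 : (∑ y ∈ t.X, t.E y x.val (extendOn t.X (fun z => fl z.val) y)) =
        ∑ y ∈ t.X, t.E y x.val (fl y) :=
      Finset.sum_congr rfl fun y hy => by rw [extendOn_mem t.X _ hy]
    have h2 : (∑ y ∈ s.X, s.E y x.val (s.flowWith (Jin s t i (fun z => fl z.val)) y)) =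
        ∑ y ∈ s.X, s.E y x.val (fl y) :=
      Finset.sum_congr rfl fun y hy => by
        rw [← gmul_dec_left s t i hd hi0 hifin y hy]
    unfold Bek
    rw [h1, h2]
    exact (hflspec x.val x.2).symm
  have dir1 : ∀ x, kleeneOn (Bek s t i) x ≤ fl x.val :=
    fun x => kleene_le _ hmono (fun z => fl z.val) (fun z => le_of_eq (hfix z)) x
  set k := kleeneOn (Bek s t i) with hk
  have hBekfix : ∀ x, Bek s t i k x = k x := kleene_fix _ hcont hmono
  set K := s.flowWith (Jin s t i k) with hK
  have hKfix : ∀ x ∈ s.X, K x = ((∑ᶠ y, i y x) + ∑ y ∈ t.X, t.E y x (extendOn t.X k y)) +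
      ∑ y ∈ s.X, s.E y x (K y) := by
    intro x hx
    rw [hK, s.flowWith_spec _ hx, totalIn_Jin s t i hi0 hifin k hx]
  have key : ∀ n x, (gmul s t).iter i n x ≤ if x ∈ s.X then K x else extendOn t.X k x := by
    intro n
    induction n with
    | zero => intro x; exact zero_le
    | succ n ih =>
      intro x
      rw [iter_succ]
      refine le_trans ((gmul s t).stepWith_mono i (fun y => ih y) x) ?_
      by_cases hxg : x ∈ (gmul s t).X
      · have hstep : (gmul s t).stepWith i
            (fun y => if y ∈ s.X then K y else extendOn t.X k y) x =
            (∑ᶠ y, i y x) + ((∑ y ∈ s.X, s.E y x (K y)) +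
              ∑ y ∈ t.X, t.E y x (extendOn t.X k y)) := by
          unfold FlowGraph.stepWith
          rw [if_pos hxg, gmul_sum_split s t hd _ x]
          congr 1
          congr 1
          · exact Finset.sum_congr rfl fun y hy => by rw [if_pos hy]
          · exact Finset.sum_congr rfl fun y hy => by
              rw [if_neg (Finset.disjoint_right.mp hd hy)]
        rw [hstep]
        by_cases hxs : x ∈ s.X
        · rw [if_pos hxs, hKfix x hxs]
          exact le_of_eq (by abel)
        · have hxt : x ∈ t.X := by
            rcases Finset.mem_union.mp hxg with h | h
            · exact absurd h hxs
            · exact h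
          rw [if_neg hxs, extendOn_mem t.X _ hxt]
          have heq : (∑ᶠ y, i y x) + ((∑ y ∈ s.X, s.E y x (K y)) +
              ∑ y ∈ t.X, t.E y x (extendOn t.X k y)) = Bek s t i k ⟨x, hxt⟩ := by
            unfold Bek
            rw [← hK]
            abel
          exact le_of_eq (heq.trans (hBekfix ⟨x, hxt⟩))
      · have h0 : (gmul s t).stepWith i
            (fun y => if y ∈ s.X then K y else extendOn t.X k y) x = 0 := by
          unfold FlowGraph.stepWith; rw [if_neg hxg]
        rw [h0]
        exact zero_le
  intro x
  refine le_antisymm (dir1 x) ?_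
  have h2 : fl x.val ≤ if x.val ∈ s.X then K x.val else extendOn t.X k x.val :=
    csup_le ((gmul s t).iter_mono i x.val) fun n => key n x.val
  rw [if_neg (Finset.disjoint_right.mp hd x.2), extendOn_mem t.X _ x.2] at h2
  exact h2

end BekLemmas
section CoreLemma

open FlowMonoid FlowGraph

variable {M : Type u} [FlowMonoid M]

lemma finsum_le_finsum_of_le {f g : ℕ → M} (h : ∀ y, f y ≤ g y)
    (hg : (Function.support g).Finite) : ∑ᶠ y, f y ≤ ∑ᶠ y, g y := by
  have hf : Function.support f ⊆ Function.support g := fun y hy => by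
    rw [Function.mem_support] at hy ⊢
    intro h0
    exact hy (le_antisymm (h0 ▸ h y) (zero_le))
  rw [finsum_eq_sum_of_support_subset f (s := hg.toFinset)
      (by rw [Set.Finite.coe_toFinset]; exact hf),
    finsum_eq_sum_of_support_subset g (s := hg.toFinset)
      (by rw [Set.Finite.coe_toFinset])]
  exact Finset.sum_le_sum fun y _ => h y

lemma core_lemma (r : M → M → Prop) (h₁ h₂ hF : FlowGraph M)
    (hmul : MDef h₁ hF) (hctx : ctxLe r h₁ h₂)
    (hc₁ : Compatible r h₁) (hc₂ : Compatible r h₂) (hcF : Compatible r hF)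
    (i : ℕ → ℕ → M) (hile : ∀ y x, i y x ≤ (gmul h₁ hF).inflow y x) :
    (∀ x ∈ hF.X, r ((gmul h₁ hF).flowWith i x) ((gmul h₂ hF).flowWith i x)) ∧
    (∀ y, y ∉ h₁.X → r (∑ x ∈ h₁.X, h₁.E x y ((gmul h₁ hF).flowWith i x))
        (∑ x ∈ h₂.X, h₂.E x y ((gmul h₂ hF).flowWith i x))) := by
  obtain ⟨hX12, hin12, htf⟩ := hctx
  obtain ⟨hd1, hbd, hfl1, hflF⟩ := hmul
  have htr := hc₁.1
  have h00 := hc₁.2.1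
  have hadd := hc₁.2.2.1
  have hmono2 := hc₂.2.2.2.1
  have hmonoF := hcF.2.2.2.1
  have hc4F := hcF.2.2.2.2
  have hd2 : Disjoint h₂.X hF.X := hX12 ▸ hd1
  have hg1in : ∀ y x, (gmul h₁ hF).inflow y x =
      if y ∈ h₁.X ∪ hF.X then 0 else h₁.inflow y x + hF.inflow y x := fun y x => rfl
  have hi0 : ∀ y ∈ h₁.X ∪ hF.X, ∀ x, i y x = 0 := by
    intro y hy x
    have hle := hile y x
    rw [hg1in, if_pos hy] at hle
    exact le_antisymm hle (zero_le)
  have hi0' : ∀ y ∈ h₂.X ∪ hF.X, ∀ x, i y x = 0 := by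
    intro y hy x
    rw [← hX12] at hy
    exact hi0 y hy x
  have hifin : ∀ x, (Function.support fun y => i y x).Finite := by
    intro x
    apply Set.Finite.subset ((gmul h₁ hF).inflow_fin x)
    intro y hy
    rw [Function.mem_support] at hy ⊢
    intro h0
    exact hy (le_antisymm (h0 ▸ hile y x) (zero_le))
  have hbndF : ∀ x ∈ hF.X, (gmul h₁ hF).flowWith i x ≤ hF.flow x := by
    intro x hx
    have h1 : (gmul h₁ hF).flowWith i x ≤ (gmul h₁ hF).flowWith (gmul h₁ hF).inflow x := by
      apply (gmul h₁ hF).flowWith_mono_inflow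
      intro z _
      exact finsum_le_finsum_of_le (fun y => hile y z) ((gmul h₁ hF).inflow_fin z)
    exact le_trans h1 (le_of_eq (hflF x hx))
  have hJle : ∀ (c : {x : ℕ // x ∈ hF.X} → M), (∀ x, c x ≤ hF.flow x.val) →
      ∀ y x, Jin h₁ hF i c y x ≤ h₁.inflow y x := by
    intro c hc y x
    unfold Jin
    by_cases hx : x ∈ h₁.X
    · rw [if_pos hx]
      by_cases hy : y ∈ hF.X
      · rw [if_pos hy, extendOn_mem hF.X _ hy]
        refine le_trans (hF.emono hy (hc ⟨y, hy⟩)) ?_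
        exact le_of_eq ((hbd x hx y hy).2)
      · rw [if_neg hy]
        by_cases hy1 : y ∈ h₁.X
        · rw [if_pos hy1]; exact zero_le
        · rw [if_neg hy1]
          have hle := hile y x
          rw [hg1in, if_neg (by simp [Finset.mem_union, hy1, hy])] at hle
          refine le_trans hle ?_
          have hF0 : hF.inflow y x = 0 := by
            by_contra h0
            exact (Finset.disjoint_left.mp hd1 hx) (hF.inflow_dom y x h0).2
          rw [hF0, add_zero]
    · rw [if_neg hx]; exact zero_le
  have hJ2 : ∀ c, Jin h₂ hF i c = Jin h₁ hF i c := by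
    intro c; unfold Jin; rw [hX12]
  have hcontf := bek_cont h₁ hF i hi0 hifin
  have hcontg := bek_cont h₂ hF i hi0' hifin
  have hmonof := bek_mono h₁ hF i hi0 hifin
  have hmonog := bek_mono h₂ hF i hi0' hifin
  have hkf : ∀ x, kleeneOn (Bek h₁ hF i) x = (gmul h₁ hF).flowWith i x.val :=
    bek_kleene h₁ hF i hd1 hi0 hifin
  have hkg : ∀ x, kleeneOn (Bek h₂ hF i) x = (gmul h₂ hF).flowWith i x.val :=
    bek_kleene h₂ hF i hd2 hi0' hifin
  have hrmono : ∀ (s : FlowGraph M), Compatible r s →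
      (∀ y ∈ s.X ∪ hF.X, ∀ x, i y x = 0) → RMonoOn r hF.X (Bek s hF i) := by
    intro s hcs hi0s c d hcd x
    unfold Bek
    refine radd2 htr hadd (radd2 htr hadd (rrefl h00 hadd _) ?_) ?_
    · refine rsum htr h00 hadd hF.X _ _ fun y hy => ?_
      refine hmonoF y x.val hy _ _ ?_
      rw [extendOn_mem hF.X c hy, extendOn_mem hF.X d hy]
      exact hcd _
    · refine rsum htr h00 hadd s.X _ _ fun y hy => ?_
      refine hcs.2.2.2.1 y x.val hy _ _ ?_
      refine flow_r_mono r s hcs _ _ ?_ y hy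
      intro z hz
      rw [totalIn_Jin s hF i hi0s hifin c hz, totalIn_Jin s hF i hi0s hifin d hz]
      refine radd2 htr hadd (rrefl h00 hadd _) ?_
      refine rsum htr h00 hadd hF.X _ _ fun w hw => ?_
      refine hmonoF w z hw _ _ ?_
      rw [extendOn_mem hF.X c hw, extendOn_mem hF.X d hw]
      exact hcd _
  have hstep12 : ∀ (c : {x : ℕ // x ∈ hF.X} → M), (∀ x, c x ≤ hF.flow x.val) →
      ∀ x : {x : ℕ // x ∈ hF.X}, r (Bek h₁ hF i c x) (Bek h₂ hF i c x) := by
    intro c hc x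
    unfold Bek
    refine radd2 htr hadd (rrefl h00 hadd _) ?_
    rw [hJ2 c]
    have hres := htf (Jin h₁ hF i c) (hJle c hc) x.val (Finset.disjoint_right.mp hd1 x.2)
    unfold FlowGraph.tf at hres
    exact hres
  have hit : ∀ (n : ℕ) (x : {x : ℕ // x ∈ hF.X}),
      r (((Bek h₁ hF i)^[n] fun _ => 0) x) (((Bek h₂ hF i)^[n] fun _ => 0) x) := by
    intro n
    induction n with
    | zero => intro x; exact h00
    | succ n ih =>
      intro x
      rw [Function.iterate_succ_apply', Function.iterate_succ_apply']
      have hcle : ∀ z, ((Bek h₁ hF i)^[n] fun _ => 0) z ≤ hF.flow z.val := by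
        intro z
        refine le_trans (le_kleene (Bek h₁ hF i) hmonof n z) ?_
        rw [hkf z]
        exact hbndF z.val z.2
      exact htr _ _ _ (hstep12 _ hcle x) (hrmono h₂ hc₂ hi0' _ _ ih x)
  have hlfp : ∀ x, r (kleeneOn (Bek h₁ hF i) x) (Bek h₂ hF i (kleeneOn (Bek h₁ hF i)) x) := by
    intro x
    have hkle : ∀ z, kleeneOn (Bek h₁ hF i) z ≤ hF.flow z.val := fun z => by
      rw [hkf z]; exact hbndF z.val z.2
    have h1 : kleeneOn (Bek h₁ hF i) x = Bek h₁ hF i (kleeneOn (Bek h₁ hF i)) x :=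
      (kleene_fix (Bek h₁ hF i) hcontf hmonof x).symm
    rw [h1]
    exact hstep12 _ hkle x
  have coreF := hc4F (Bek h₁ hF i) (Bek h₂ hF i) hcontf hcontg
    (hrmono h₁ hc₁ hi0) (hrmono h₂ hc₂ hi0') hit hlfp
  constructor
  · intro x hx
    have hres := coreF ⟨x, hx⟩
    rwa [hkf, hkg] at hres
  · intro y hy
    have hdec1 := gmul_dec_left h₁ hF i hd1 hi0 hifin
    have hdec2 := gmul_dec_left h₂ hF i hd2 hi0' hifin
    have hL : (∑ x ∈ h₁.X, h₁.E x y ((gmul h₁ hF).flowWith i x)) =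
        ∑ x ∈ h₁.X, h₁.E x y
          (h₁.flowWith (Jin h₁ hF i (fun z => (gmul h₁ hF).flowWith i z.val)) x) :=
      Finset.sum_congr rfl fun x hx => by rw [hdec1 x hx]
    have hR : (∑ x ∈ h₂.X, h₂.E x y ((gmul h₂ hF).flowWith i x)) =
        ∑ x ∈ h₂.X, h₂.E x y
          (h₂.flowWith (Jin h₁ hF i (fun z => (gmul h₂ hF).flowWith i z.val)) x) :=
      Finset.sum_congr rfl fun x hx => by rw [hdec2 x hx, hJ2]
    rw [hL, hR]
    have hk₁le : ∀ z : {x : ℕ // x ∈ hF.X},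
        (fun z : {x : ℕ // x ∈ hF.X} => (gmul h₁ hF).flowWith i z.val) z ≤ hF.flow z.val :=
      fun z => hbndF z.val z.2
    have step1 : r (∑ x ∈ h₁.X, h₁.E x y
          (h₁.flowWith (Jin h₁ hF i (fun z => (gmul h₁ hF).flowWith i z.val)) x))
        (∑ x ∈ h₂.X, h₂.E x y
          (h₂.flowWith (Jin h₁ hF i (fun z => (gmul h₁ hF).flowWith i z.val)) x)) := by
      have hres := htf (Jin h₁ hF i (fun z => (gmul h₁ hF).flowWith i z.val))
        (hJle _ hk₁le) y hy
      unfold FlowGraph.tf at hres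
      exact hres
    have step2 : r (∑ x ∈ h₂.X, h₂.E x y
          (h₂.flowWith (Jin h₁ hF i (fun z => (gmul h₁ hF).flowWith i z.val)) x))
        (∑ x ∈ h₂.X, h₂.E x y
          (h₂.flowWith (Jin h₁ hF i (fun z => (gmul h₂ hF).flowWith i z.val)) x)) := by
      refine rsum htr h00 hadd h₂.X _ _ fun x hx => ?_
      refine hmono2 x y hx _ _ ?_
      refine flow_r_mono r h₂ hc₂ _ _ ?_ x hx
      intro z hz
      rw [← hJ2, ← hJ2,
        totalIn_Jin h₂ hF i hi0' hifin _ hz, totalIn_Jin h₂ hF i hi0' hifin _ hz]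
      refine radd2 htr hadd (rrefl h00 hadd _) ?_
      refine rsum htr h00 hadd hF.X _ _ fun w hw => ?_
      refine hmonoF w z hw _ _ ?_
      rw [extendOn_mem hF.X _ hw, extendOn_mem hF.X _ hw]
      have hres := coreF ⟨w, hw⟩
      rw [hkf, hkg] at hres
      exact hres
    exact htr _ _ _ step1 step2

end CoreLemma
section Construction

open FlowMonoid FlowGraph

variable {M : Type u} [FlowMonoid M]

lemma FlowGraph.ext' {g1 g2 : FlowGraph M} (hX : g1.X = g2.X) (hE : g1.E = g2.E)
    (hin : g1.inflow = g2.inflow) : g1 = g2 := by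
  cases g1; cases g2
  dsimp at hX hE hin
  subst hX; subst hE; subst hin
  rfl

/-- Replace the inflow of `h` at sources in `t.X` by the `t`-outflow values
determined by `v`. -/
noncomputable def adjust (h t : FlowGraph M) (hd : Disjoint h.X t.X) (v : ℕ → M) :
    FlowGraph M where
  X := h.X
  E := h.E
  inflow := fun y x => if y ∈ t.X then (if x ∈ h.X then t.E y x (v y) else 0)
    else h.inflow y x
  econt := h.econt
  edom := h.edom
  inflow_fin := by
    intro x
    refine Set.Finite.subset ((h.inflow_fin x).union t.X.finite_toSet) ?_
    intro y hy
    rw [Function.mem_support] at hy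
    by_cases hyt : y ∈ t.X
    · exact Set.mem_union_right _ hyt
    · rw [if_neg hyt] at hy
      exact Set.mem_union_left _ (Function.mem_support.mpr hy)
  inflow_dom := by
    intro y x hy
    by_cases hyt : y ∈ t.X
    · rw [if_pos hyt] at hy
      by_cases hx : x ∈ h.X
      · exact ⟨Finset.disjoint_right.mp hd hyt, hx⟩
      · rw [if_neg hx] at hy; exact absurd rfl hy
    · rw [if_neg hyt] at hy
      exact h.inflow_dom y x hy

@[simp] lemma adjust_X (h t : FlowGraph M) (hd : Disjoint h.X t.X) (v : ℕ → M) :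
    (adjust h t hd v).X = h.X := rfl

@[simp] lemma adjust_E (h t : FlowGraph M) (hd : Disjoint h.X t.X) (v : ℕ → M) :
    (adjust h t hd v).E = h.E := rfl

lemma adjust_inflow (h t : FlowGraph M) (hd : Disjoint h.X t.X) (v : ℕ → M) (y x : ℕ) :
    (adjust h t hd v).inflow y x =
      if y ∈ t.X then (if x ∈ h.X then t.E y x (v y) else 0) else h.inflow y x := rfl

lemma adjust_flowWith (h t : FlowGraph M) (hd : Disjoint h.X t.X) (v : ℕ → M)
    (j : ℕ → ℕ → M) : (adjust h t hd v).flowWith j = h.flowWith j := rfl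

lemma adjust_gmul (s t : FlowGraph M) (hd : Disjoint s.X t.X) (hd' : Disjoint t.X s.X)
    (v w : ℕ → M) :
    gmul (adjust s t hd v) (adjust t s hd' w) = gmul s t := by
  apply FlowGraph.ext'
  · rfl
  · rfl
  · funext y x
    show (if y ∈ s.X ∪ t.X then 0
        else (adjust s t hd v).inflow y x + (adjust t s hd' w).inflow y x) =
      (if y ∈ s.X ∪ t.X then 0 else s.inflow y x + t.inflow y x)
    by_cases hy : y ∈ s.X ∪ t.X
    · rw [if_pos hy, if_pos hy]
    · rw [if_neg hy, if_neg hy]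
      have hys : y ∉ s.X := fun h => hy (Finset.mem_union_left _ h)
      have hyt : y ∉ t.X := fun h => hy (Finset.mem_union_right _ h)
      rw [adjust_inflow, adjust_inflow, if_neg hyt, if_neg hys]

end Construction
section AdjustFlow

open FlowMonoid FlowGraph

variable {M : Type u} [FlowMonoid M]

lemma gmul_inflow_zero (s t : FlowGraph M) :
    ∀ y ∈ (gmul s t).X, ∀ x, (gmul s t).inflow y x = 0 := by
  intro y hy x
  have hy' : y ∈ s.X ∪ t.X := hy
  show (if y ∈ s.X ∪ t.X then 0 else s.inflow y x + t.inflow y x) = 0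
  rw [if_pos hy']

lemma adjust_flow_left (s t : FlowGraph M) (hd : Disjoint s.X t.X) :
    ∀ x ∈ s.X, (adjust s t hd ((gmul s t).flow)).flow x = (gmul s t).flow x := by
  have hdec := (flow_decompose (gmul s t) s (gmul s t).inflow Finset.subset_union_left
    (fun y hy => gmulE_left s t hy) (gmul_inflow_zero s t) (gmul s t).inflow_fin).2
  have hsd : (gmul s t).X \ s.X = t.X := Finset.union_sdiff_cancel_left hd
  have hii : ∀ z ∈ s.X, (∑ᶠ y, (adjust s t hd ((gmul s t).flow)).inflow y z) =
      ∑ᶠ y, (fun (y x : ℕ) => if x ∈ s.X then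
        (if y ∈ (gmul s t).X \ s.X then
          (gmul s t).E y x ((gmul s t).flowWith (gmul s t).inflow y)
         else if y ∈ s.X then 0 else (gmul s t).inflow y x) else 0) y z := by
    intro z hz
    have e1 : (fun y => (adjust s t hd ((gmul s t).flow)).inflow y z) =
        fun y => if y ∈ t.X then t.E y z ((gmul s t).flow y) else s.inflow y z := by
      funext y
      rw [adjust_inflow]
      by_cases hyt : y ∈ t.X
      · rw [if_pos hyt, if_pos hyt, if_pos hz]
      · rw [if_neg hyt, if_neg hyt]
    have e2 : (fun y => (fun (y x : ℕ) => if x ∈ s.X then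
        (if y ∈ (gmul s t).X \ s.X then
          (gmul s t).E y x ((gmul s t).flowWith (gmul s t).inflow y)
         else if y ∈ s.X then 0 else (gmul s t).inflow y x) else 0) y z) =
        fun y => if y ∈ t.X then t.E y z ((gmul s t).flow y) else
          (if y ∈ s.X then 0 else (gmul s t).inflow y z) := by
      funext y
      dsimp only
      rw [if_pos hz]
      by_cases hyt : y ∈ t.X
      · rw [if_pos (show y ∈ (gmul s t).X \ s.X by rw [hsd]; exact hyt), if_pos hyt,
          gmulE_right s t hd hyt]
        exact rfl
      · rw [if_neg (show y ∉ (gmul s t).X \ s.X by rw [hsd]; exact hyt), if_neg hyt]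
    have hB2 : (Function.support fun y => if y ∈ s.X then (0:M)
        else (gmul s t).inflow y z).Finite := by
      apply Set.Finite.subset ((gmul s t).inflow_fin z)
      intro y hy
      rw [Function.mem_support] at hy ⊢
      intro h0
      simp [h0] at hy
    have p1 := finsum_piecewise t.X (fun y => t.E y z ((gmul s t).flow y))
      (fun y => s.inflow y z) (s.inflow_fin z)
    have p2 := finsum_piecewise t.X (fun y => t.E y z ((gmul s t).flow y))
      (fun y => if y ∈ s.X then (0:M) else (gmul s t).inflow y z) hB2
    rw [e1, e2, p1, p2]
    congr 1
    apply finsum_congr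
    intro y
    by_cases hyt : y ∈ t.X
    · rw [if_pos hyt, if_pos hyt]
    · rw [if_neg hyt, if_neg hyt]
      by_cases hys : y ∈ s.X
      · rw [if_pos hys]
        have hzero : s.inflow y z = 0 := by
          by_contra h0
          exact (s.inflow_dom y z h0).1 hys
        rw [hzero]
      · rw [if_neg hys]
        have hyu : y ∉ s.X ∪ t.X := by simp [Finset.mem_union, hys, hyt]
        show s.inflow y z = if y ∈ s.X ∪ t.X then 0 else s.inflow y z + t.inflow y z
        rw [if_neg hyu]
        have ht0 : t.inflow y z = 0 := by
          by_contra h0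
          exact (Finset.disjoint_left.mp hd hz) ((t.inflow_dom y z h0).2)
        rw [ht0, add_zero]
  intro x hx
  have h1 : (adjust s t hd ((gmul s t).flow)).flow x =
      s.flowWith (adjust s t hd ((gmul s t).flow)).inflow x := rfl
  rw [h1, s.flowWith_congr_inflow _ hii x]
  exact (hdec x hx).symm

lemma adjust_flow_right (s t : FlowGraph M) (hd : Disjoint s.X t.X) :
    ∀ x ∈ t.X, (adjust t s hd.symm ((gmul s t).flow)).flow x = (gmul s t).flow x := by
  have hdec := (flow_decompose (gmul s t) t (gmul s t).inflow Finset.subset_union_right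
    (fun y hy => gmulE_right s t hd hy) (gmul_inflow_zero s t) (gmul s t).inflow_fin).2
  have hsd : (gmul s t).X \ t.X = s.X := Finset.union_sdiff_cancel_right hd
  have hii : ∀ z ∈ t.X, (∑ᶠ y, (adjust t s hd.symm ((gmul s t).flow)).inflow y z) =
      ∑ᶠ y, (fun (y x : ℕ) => if x ∈ t.X then
        (if y ∈ (gmul s t).X \ t.X then
          (gmul s t).E y x ((gmul s t).flowWith (gmul s t).inflow y)
         else if y ∈ t.X then 0 else (gmul s t).inflow y x) else 0) y z := by
    intro z hz
    have e1 : (fun y => (adjust t s hd.symm ((gmul s t).flow)).inflow y z) =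
        fun y => if y ∈ s.X then s.E y z ((gmul s t).flow y) else t.inflow y z := by
      funext y
      rw [adjust_inflow]
      by_cases hys : y ∈ s.X
      · rw [if_pos hys, if_pos hys, if_pos hz]
      · rw [if_neg hys, if_neg hys]
    have e2 : (fun y => (fun (y x : ℕ) => if x ∈ t.X then
        (if y ∈ (gmul s t).X \ t.X then
          (gmul s t).E y x ((gmul s t).flowWith (gmul s t).inflow y)
         else if y ∈ t.X then 0 else (gmul s t).inflow y x) else 0) y z) =
        fun y => if y ∈ s.X then s.E y z ((gmul s t).flow y) else
          (if y ∈ t.X then 0 else (gmul s t).inflow y z) := by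
      funext y
      dsimp only
      rw [if_pos hz]
      by_cases hys : y ∈ s.X
      · rw [if_pos (show y ∈ (gmul s t).X \ t.X by rw [hsd]; exact hys), if_pos hys,
          gmulE_left s t hys]
        exact rfl
      · rw [if_neg (show y ∉ (gmul s t).X \ t.X by rw [hsd]; exact hys), if_neg hys]
    have hB2 : (Function.support fun y => if y ∈ t.X then (0:M)
        else (gmul s t).inflow y z).Finite := by
      apply Set.Finite.subset ((gmul s t).inflow_fin z)
      intro y hy
      rw [Function.mem_support] at hy ⊢
      intro h0
      simp [h0] at hy
    have p1 := finsum_piecewise s.X (fun y => s.E y z ((gmul s t).flow y))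
      (fun y => t.inflow y z) (t.inflow_fin z)
    have p2 := finsum_piecewise s.X (fun y => s.E y z ((gmul s t).flow y))
      (fun y => if y ∈ t.X then (0:M) else (gmul s t).inflow y z) hB2
    rw [e1, e2, p1, p2]
    congr 1
    apply finsum_congr
    intro y
    by_cases hys : y ∈ s.X
    · rw [if_pos hys, if_pos hys]
    · rw [if_neg hys, if_neg hys]
      by_cases hyt : y ∈ t.X
      · rw [if_pos hyt]
        have hzero : t.inflow y z = 0 := by
          by_contra h0
          exact (t.inflow_dom y z h0).1 hyt
        rw [hzero]
      · rw [if_neg hyt]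
        have hyu : y ∉ s.X ∪ t.X := by simp [Finset.mem_union, hys, hyt]
        show t.inflow y z = if y ∈ s.X ∪ t.X then 0 else s.inflow y z + t.inflow y z
        rw [if_neg hyu]
        have hs0 : s.inflow y z = 0 := by
          by_contra h0
          exact (Finset.disjoint_right.mp hd hz) ((s.inflow_dom y z h0).2)
        rw [hs0, zero_add]
  intro x hx
  have h1 : (adjust t s hd.symm ((gmul s t).flow)).flow x =
      t.flowWith (adjust t s hd.symm ((gmul s t).flow)).inflow x := rfl
  rw [h1, t.flowWith_congr_inflow _ hii x]
  exact (hdec x hx).symm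

end AdjustFlow
open FlowGraph in
/-- Upward-closed framing theorem. For `h₁ ⋆ h_F` defined,
`h₁ ⪯ctx h₂` and `⪯` compatible with `h₁`, `h₂`, `h_F`, there are flow graphs
`h₂' ∈ closure^{h_F.X}_⪯(h₂)` and `h_F' ∈ closure^{h₂.X}_⪯(h_F)` such that
`h₂' ⋆ h_F'` is defined and `h₁ ⋆ h_F ⪯ctx h₂' ⋆ h_F'`. -/
theorem upward_closed_framing (r : M → M → Prop) (h₁ h₂ hF : FlowGraph M)
    (hmul : MDef h₁ hF) (hctx : ctxLe r h₁ h₂)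
    (hc₁ : Compatible r h₁) (hc₂ : Compatible r h₂) (hcF : Compatible r hF) :
    ∃ h₂' ∈ closureSet r hF.X h₂, ∃ hF' ∈ closureSet r h₂.X hF,
      MDef h₂' hF' ∧ ctxLe r (gmul h₁ hF) (gmul h₂' hF') := by
  
  have hX12 : h₁.X = h₂.X := hctx.1
  have hin12 : h₁.inflow = h₂.inflow := hctx.2.1
  have hd1 : Disjoint h₁.X hF.X := hmul.1
  have hd2 : Disjoint h₂.X hF.X := hX12 ▸ hd1
  have htr := hc₁.1
  have h00 := hc₁.2.1
  have hadd := hc₁.2.2.1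
  have hmonoF := hcF.2.2.2.1
  have hIn : (gmul h₂ hF).inflow = (gmul h₁ hF).inflow := by
    funext y x
    show (if y ∈ h₂.X ∪ hF.X then 0 else h₂.inflow y x + hF.inflow y x) =
      (if y ∈ h₁.X ∪ hF.X then 0 else h₁.inflow y x + hF.inflow y x)
    rw [hX12, hin12]
  have hflW : (gmul h₂ hF).flowWith ((gmul h₁ hF).inflow) = (gmul h₂ hF).flow := by
    show (gmul h₂ hF).flowWith ((gmul h₁ hF).inflow) =
      (gmul h₂ hF).flowWith ((gmul h₂ hF).inflow)
    rw [hIn]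
  have core0 := core_lemma r h₁ h₂ hF hmul hctx hc₁ hc₂ hcF (gmul h₁ hF).inflow
    (fun y x => le_rfl)
  have coreF0 : ∀ x ∈ hF.X, r ((gmul h₁ hF).flow x) ((gmul h₂ hF).flow x) := by
    intro x hx
    have h := core0.1 x hx
    rwa [hflW] at h
  have core10 : ∀ y, y ∉ h₁.X → r (∑ x ∈ h₁.X, h₁.E x y ((gmul h₁ hF).flow x))
      (∑ x ∈ h₂.X, h₂.E x y ((gmul h₂ hF).flow x)) := by
    intro y hy
    have h := core0.2 y hy
    rwa [hflW] at h
  have hA := adjust_flow_left h₂ hF hd2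
  have hB := adjust_flow_right h₂ hF hd2
  have hgg : gmul (adjust h₂ hF hd2 ((gmul h₂ hF).flow))
      (adjust hF h₂ hd2.symm ((gmul h₂ hF).flow)) = gmul h₂ hF :=
    adjust_gmul h₂ hF hd2 hd2.symm _ _
  refine ⟨adjust h₂ hF hd2 ((gmul h₂ hF).flow), ?_,
    adjust hF h₂ hd2.symm ((gmul h₂ hF).flow), ?_, ?_, ?_⟩
  · -- closure membership for h₂'
    refine ⟨rfl, rfl, ?_, ?_⟩
    · intro y hy x
      rw [adjust_inflow, if_neg hy]
    · intro x hx
      refine rsum htr h00 hadd hF.X _ _ fun y hy => ?_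
      have e1 : h₂.inflow y x = hF.E y x ((gmul h₁ hF).flow y) := by
        have hx1 : x ∈ h₁.X := by rw [hX12]; exact hx
        have hb := (hmul.2.1 x hx1 y hy).2
        rw [← hin12, ← hb]
        show hF.E y x (hF.flow y) = hF.E y x ((gmul h₁ hF).flow y)
        rw [hmul.2.2.2 y hy]
      have e2 : (adjust h₂ hF hd2 ((gmul h₂ hF).flow)).inflow y x =
          hF.E y x ((gmul h₂ hF).flow y) := by
        rw [adjust_inflow, if_pos hy, if_pos hx]
      rw [e1, e2]
      exact hmonoF y x hy _ _ (coreF0 y hy)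
  · -- closure membership for hF'
    refine ⟨rfl, rfl, ?_, ?_⟩
    · intro y hy x
      rw [adjust_inflow, if_neg hy]
    · intro x hx
      have e1 : (∑ y ∈ h₂.X, hF.inflow y x) =
          ∑ y ∈ h₁.X, h₁.E y x ((gmul h₁ hF).flow y) := by
        rw [← hX12]
        refine Finset.sum_congr rfl fun y hy => ?_
        have hb := (hmul.2.1 y hy x hx).1
        rw [← hb]
        show h₁.E y x (h₁.flow y) = h₁.E y x ((gmul h₁ hF).flow y)
        rw [hmul.2.2.1 y hy]
      have e2 : (∑ y ∈ h₂.X, (adjust hF h₂ hd2.symm ((gmul h₂ hF).flow)).inflow y x) =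
          ∑ y ∈ h₂.X, h₂.E y x ((gmul h₂ hF).flow y) :=
        Finset.sum_congr rfl fun y hy => by rw [adjust_inflow, if_pos hy, if_pos hx]
      rw [e1, e2]
      exact core10 x (Finset.disjoint_right.mp hd1 hx)
  · -- MDef
    refine ⟨hd2, ?_, ?_, ?_⟩
    · intro x hx y hy
      have hx2 : x ∈ h₂.X := hx
      have hyF : y ∈ hF.X := hy
      constructor
      · show (adjust h₂ hF hd2 ((gmul h₂ hF).flow)).E x y
            ((adjust h₂ hF hd2 ((gmul h₂ hF).flow)).flow x) = _
        rw [adjust_E, hA x hx2]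
        show h₂.E x y ((gmul h₂ hF).flow x) =
          (if x ∈ h₂.X then (if y ∈ hF.X then h₂.E x y ((gmul h₂ hF).flow x) else 0)
            else hF.inflow x y)
        rw [if_pos hx2, if_pos hyF]
      · show (adjust hF h₂ hd2.symm ((gmul h₂ hF).flow)).E y x
            ((adjust hF h₂ hd2.symm ((gmul h₂ hF).flow)).flow y) = _
        rw [adjust_E, hB y hyF]
        show hF.E y x ((gmul h₂ hF).flow y) =
          (if y ∈ hF.X then (if x ∈ h₂.X then hF.E y x ((gmul h₂ hF).flow y) else 0)
            else h₂.inflow y x)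
        rw [if_pos hyF, if_pos hx2]
    · intro x hx
      rw [hgg]
      exact (hA x hx).symm
    · intro y hy
      rw [hgg]
      exact (hB y hy).symm
  · -- ctxLe
    rw [hgg]
    refine ⟨?_, ?_, ?_⟩
    · show h₁.X ∪ hF.X = h₂.X ∪ hF.X
      rw [hX12]
    · exact hIn.symm
    · intro j hjle y hy
      have hy1 : y ∉ h₁.X := fun h => hy (Finset.mem_union_left _ h)
      have core := core_lemma r h₁ h₂ hF hmul hctx hc₁ hc₂ hcF j hjle
      show r ((gmul h₁ hF).tf j y) ((gmul h₂ hF).tf j y)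
      unfold FlowGraph.tf
      rw [gmul_sum_split h₁ hF hd1 _ y, gmul_sum_split h₂ hF hd2 _ y]
      exact radd2 htr hadd (core.2 y hy1)
        (rsum htr h00 hadd hF.X _ _ fun x hx => hmonoF x y hx _ _ (core.1 x hx))
end

section
/- Sub-ω-cpo implies (C4): if a relation ⪯ on the flow monoid M is a sub-ω-cpo of the natural order ≤, i.e. ⪯ ⊆ ≤, (M,⪯) is itself an ω-cpo, and every ⪯-ascending chain has the same supremum with respect to ⪯ and with respect to ≤, then condition (C4) holds for every flow graph over M: for all ≤-continuous, pointwise-⪯-monotone functions f, g : (X → M) → (X → M) with fⁱ(⊥) pointwise-⪯ gⁱ(⊥) for all i ∈ ℕ and lfp(f) pointwise-⪯ g(lfp(f)), one has ⨆ᵢ fⁱ(⊥) pointwise-⪯ ⨆ᵢ gⁱ(⊥). -/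
universe u

variable {M : Type u} [FlowMonoid M]

private lemma contOn_mono {X : Finset ℕ}
    {f : ({x : ℕ // x ∈ X} → M) → ({x : ℕ // x ∈ X} → M)}
    (hf : ContOn X f) : MonoOn X f := by
  intro c d hcd x
  set Ch : ℕ → ({x : ℕ // x ∈ X} → M) := fun i => if i = 0 then c else d with hCh
  have hasc : ∀ i x, Ch i x ≤ Ch (i + 1) x := by
    intro i x
    cases i with
    | zero => simpa [Ch] using hcd x
    | succ n => simp [Ch]
  have hjoin : chainJoin Ch = d := by
    funext y
    have hm : Monotone fun i => Ch i y := monotone_nat_of_le_succ fun i => hasc i y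
    have h1 : IsLUB (Set.range fun i => Ch i y) (FlowMonoid.csup fun i => Ch i y) :=
      FlowMonoid.isLUB_csup _ hm
    have h2 : IsLUB (Set.range fun i => Ch i y) (d y) := by
      constructor
      · rintro _ ⟨i, rfl⟩
        cases i with
        | zero => simpa [Ch] using hcd y
        | succ n => simp [Ch]
      · intro u hu
        simpa [Ch] using hu ⟨1, rfl⟩
    exact h1.unique h2
  have := hf Ch hasc x
  rw [hjoin] at this
  exact this.1 ⟨0, by simp [Ch]⟩

private lemma iter_asc {X : Finset ℕ}
    {f : ({x : ℕ // x ∈ X} → M) → ({x : ℕ // x ∈ X} → M)}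
    (hf : ContOn X f) :
    ∀ i, ∀ x, (f^[i] fun _ => 0) x ≤ (f^[i + 1] fun _ => 0) x := by
  intro i
  induction i with
  | zero => intro x; exact zero_le
  | succ n ih =>
    intro x
    rw [Function.iterate_succ_apply', Function.iterate_succ_apply']
    exact contOn_mono hf _ _ ih x

private lemma kleene_isLUB {X : Finset ℕ}
    {f : ({x : ℕ // x ∈ X} → M) → ({x : ℕ // x ∈ X} → M)}
    (hf : ContOn X f) (x : {x : ℕ // x ∈ X}) :
    IsLUB (Set.range fun i => (f^[i] fun _ => 0) x) (kleeneOn f x) :=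
  FlowMonoid.isLUB_csup _ (monotone_nat_of_le_succ fun i => iter_asc hf i x)

private lemma kleene_fixed {X : Finset ℕ}
    {g : ({x : ℕ // x ∈ X} → M) → ({x : ℕ // x ∈ X} → M)}
    (hg : ContOn X g) :
    ∀ x, g (kleeneOn g) x = kleeneOn g x := by
  intro x
  have hasc := iter_asc hg
  have h1 : IsLUB (Set.range fun i => g (g^[i] fun _ => 0) x) (g (kleeneOn g) x) := by
    have := hg (fun i => g^[i] fun _ => 0) (fun i y => hasc i y) x
    have hjoin : chainJoin (fun i => g^[i] fun _ => 0) = kleeneOn g := rfl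
    rwa [hjoin] at this
  have hk := kleene_isLUB hg x
  have h2 : IsLUB (Set.range fun i => g (g^[i] fun _ => 0) x) (kleeneOn g x) := by
    constructor
    · rintro _ ⟨i, rfl⟩
      have heq : g (g^[i] fun _ => 0) x = (g^[i + 1] fun _ => 0) x := by
        rw [Function.iterate_succ_apply']
      show g (g^[i] fun _ => 0) x ≤ kleeneOn g x
      rw [heq]
      exact hk.1 ⟨i + 1, rfl⟩
    · intro u hu
      apply hk.2
      rintro _ ⟨i, rfl⟩
      calc (g^[i] fun _ => 0) x ≤ (g^[i + 1] fun _ => 0) x := hasc i x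
        _ = g (g^[i] fun _ => 0) x := by rw [Function.iterate_succ_apply']
        _ ≤ u := hu ⟨i, rfl⟩
  exact h1.unique h2

/-- Sub-ω-cpo implies (C4). If `⪯` is a partial order contained
in the natural order `≤`, and every `⪯`-ascending chain has `csup K` (its join
w.r.t. `≤`) as its least upper bound also w.r.t. `⪯` (i.e. `(M,⪯)` is an ω-cpo
whose chain-suprema agree with those of `≤`), then condition (C4) holds for
every flow graph over `M`. -/
theorem sub_omega_cpo_implies_C4 (r : M → M → Prop)
    (hrefl : ∀ m : M, r m m)
    (htrans : ∀ m n o : M, r m n → r n o → r m o)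
    (hantisymm : ∀ m n : M, r m n → r n m → m = n)
    (hsub : ∀ m n : M, r m n → m ≤ n)
    (hlub : ∀ K : ℕ → M, (∀ i, r (K i) (K (i + 1))) →
      (∀ i, r (K i) (FlowMonoid.csup K)) ∧
      (∀ u : M, (∀ i, r (K i) u) → r (FlowMonoid.csup K) u)) :
    ∀ h : FlowGraph M, C4 r h.X := by
  intro h f g hfc hgc hfm hgm hiter hfix x
  set C : ℕ → ({x : ℕ // x ∈ h.X} → M) := fun i => g^[i] (kleeneOn f) with hC
  -- the chain `C` is `r`-ascending
  have hCasc : ∀ i, ∀ y, r (C i y) (C (i + 1) y) := by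
    intro i
    induction i with
    | zero => intro y; simpa [C] using hfix y
    | succ n ih =>
      intro y
      have h1 : C (n + 1) = g (C n) := by
        simp only [C, Function.iterate_succ_apply']
      have h2 : C (n + 2) = g (C (n + 1)) := by
        simp only [C, Function.iterate_succ_apply']
      rw [h1, h2]
      exact hgm _ _ ih y
  -- `kleeneOn f ≤ kleeneOn g` pointwise
  have hKfKg : ∀ y, kleeneOn f y ≤ kleeneOn g y := by
    intro y
    apply (kleene_isLUB hfc y).2
    rintro _ ⟨i, rfl⟩
    exact le_trans (hsub _ _ (hiter i y)) ((kleene_isLUB hgc y).1 ⟨i, rfl⟩)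
  -- each `C i` is pointwise ≤ `kleeneOn g`
  have hCle : ∀ i, ∀ y, C i y ≤ kleeneOn g y := by
    intro i
    induction i with
    | zero => intro y; simpa [C] using hKfKg y
    | succ n ih =>
      intro y
      have h1 : C (n + 1) = g (C n) := by
        simp only [C, Function.iterate_succ_apply']
      rw [h1]
      calc g (C n) y ≤ g (kleeneOn g) y := contOn_mono hgc _ _ ih y
        _ = kleeneOn g y := kleene_fixed hgc y
  -- `g^[i] ⊥ ≤ C i` pointwise
  have hbotC : ∀ i, ∀ y, (g^[i] fun _ => 0) y ≤ C i y := by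
    intro i
    induction i with
    | zero => intro y; exact zero_le
    | succ n ih =>
      intro y
      have h1 : C (n + 1) = g (C n) := by
        simp only [C, Function.iterate_succ_apply']
      rw [Function.iterate_succ_apply', h1]
      exact contOn_mono hgc _ _ ih y
  -- the ≤-monotone pointwise chain at `x`
  have hmono : Monotone fun i => C i x :=
    monotone_nat_of_le_succ fun i => hsub _ _ (hCasc i x)
  have hClub : IsLUB (Set.range fun i => C i x) (FlowMonoid.csup fun i => C i x) :=
    FlowMonoid.isLUB_csup _ hmono
  -- the csup of `C` at `x` equals `kleeneOn g x`
  have heq : (FlowMonoid.csup fun i => C i x) = kleeneOn g x := by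
    apply le_antisymm
    · exact hClub.2 (by rintro _ ⟨i, rfl⟩; exact hCle i x)
    · apply (kleene_isLUB hgc x).2
      rintro _ ⟨i, rfl⟩
      exact le_trans (hbotC i x) (hClub.1 ⟨i, rfl⟩)
  have hr := (hlub (fun i => C i x) (fun i => hCasc i x)).1 0
  simp only [C, Function.iterate_zero_apply] at hr
  rwa [heq] at hr
end
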